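/- arXiv:2605.00158 — 3 statements merged into one kernel-verified Lean document; each statement's English description precedes it below -/
import Mathlib

section
/- Let M₀, M₁ ∈ ℝ^m and S₀, S₁ ∈ ℝ^{m×m} positive definite, let f₀, f₁ be the densities of N(M₀,S₀) and N(M₁,S₁), and define LLR(y) = log f₁(y) − log f₀(y). Set D = M₁ − M₀, Φ₀ = S₀^{1/2}·S₁^{−1}·S₀^{1/2} with orthogonal eigendecomposition Φ₀ = Ψ₀·Λ·Ψ₀ᵀ (Λ diagonal with entries λ_j), weights w_j = (1 − λ_j)/2, b₀ = Ψ₀ᵀ·S₀^{1/2}·S₁^{−1}·D, K₀ = {j : w_j ≠ 0}, ν_j = b_{0,j}/(2w_j) for j ∈ K₀, σ₀² = Σ_{j ∉ K₀} b_{0,j}², and C₀ = (log(det S₀/det S₁) − Dᵀ·S₁^{−1}·D)/2 − Σ_{j ∈ K₀} w_j·ν_j². Then if Y ~ N(M₀, S₀), the random variable LLR(Y) has the same distribution as Σ_{j ∈ K₀} w_j·(Z_j + ν_j)² + σ₀·Z' + C₀, where Z' and the Z_j, j ∈ K₀, are independent standard normal random variables. -/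
open Matrix MeasureTheory ProbabilityTheory

noncomputable section

section Infrastructure

open Real Set
lemma lintegral_pi_fin : ∀ (n : ℕ) (g : Fin n → ℝ → ENNReal), (∀ i, Measurable (g i)) →
    ∫⁻ x, ∏ i, g i (x i) ∂(Measure.pi fun _ : Fin n => (volume : Measure ℝ))
      = ∏ i, ∫⁻ y, g i y := by
  intro n
  induction n with
  | zero =>
    intro g hg
    rw [Measure.pi_of_empty]
    simp
  | succ n ih =>
    intro g hg
    have hmp := measurePreserving_piFinSuccAbove (fun _ : Fin (n+1) => (volume : Measure ℝ)) 0
    set G : ℝ × (Fin n → ℝ) → ENNReal :=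
      fun p => g 0 p.1 * ∏ i : Fin n, g (Fin.succAbove 0 i) (p.2 i) with hG
    have hGmeas : Measurable G := by
      apply Measurable.mul
      · exact (hg 0).comp measurable_fst
      · exact Finset.measurable_prod _ fun i _ =>
          (hg _).comp ((measurable_pi_apply i).comp measurable_snd)
    have h1 : ∀ x : Fin (n+1) → ℝ, (∏ i, g i (x i)) = G (MeasurableEquiv.piFinSuccAbove (fun _ => ℝ) 0 x) := by
      intro x
      rw [hG]
      simp only [MeasurableEquiv.piFinSuccAbove]
      rw [Fin.prod_univ_succ]
      congr 1
    calc ∫⁻ x, ∏ i, g i (x i) ∂(Measure.pi fun _ : Fin (n+1) => (volume : Measure ℝ))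
        = ∫⁻ x, G (MeasurableEquiv.piFinSuccAbove (fun _ => ℝ) 0 x) ∂(Measure.pi fun _ : Fin (n+1) => (volume : Measure ℝ)) := by
          simp_rw [h1]
      _ = ∫⁻ p, G p ∂((volume : Measure ℝ).prod (Measure.pi fun _ : Fin n => (volume : Measure ℝ))) := hmp.lintegral_comp hGmeas
      _ = ∫⁻ a, ∫⁻ b, G (a, b) ∂(Measure.pi fun _ : Fin n => (volume : Measure ℝ)) ∂(volume : Measure ℝ) := lintegral_prod _ hGmeas.aemeasurable
      _ = ∏ i, ∫⁻ y, g i y := by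
          simp_rw [hG]
          have : ∀ a : ℝ, ∫⁻ b, g 0 a * ∏ i : Fin n, g (Fin.succAbove 0 i) (b i) ∂(Measure.pi fun _ : Fin n => (volume : Measure ℝ))
              = g 0 a * ∏ i : Fin n, ∫⁻ y, g (Fin.succAbove 0 i) y := by
            intro a
            have hm2 : Measurable fun b : Fin n → ℝ => ∏ i : Fin n, g (Fin.succAbove 0 i) (b i) := by
              fun_prop
            rw [lintegral_const_mul _ hm2, ih _ (fun i => hg _)]
          simp_rw [this]
          rw [lintegral_mul_const _ (hg 0), Fin.prod_univ_succ]
          congr 1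

lemma lintegral_pi_prod {ι : Type*} [Fintype ι] (g : ι → ℝ → ENNReal)
    (hg : ∀ i, Measurable (g i)) :
    ∫⁻ x, ∏ i, g i (x i) ∂(Measure.pi fun _ : ι => (volume : Measure ℝ))
      = ∏ i, ∫⁻ y, g i y := by
  classical
  let n := Fintype.card ι
  let f : Fin n ≃ ι := (Fintype.equivFin ι).symm
  have hmp := measurePreserving_piCongrLeft (fun _ : ι => (volume : Measure ℝ)) f
  have key : ∀ y : Fin n → ℝ,
      (∏ i, g i ((MeasurableEquiv.piCongrLeft (fun _ : ι => ℝ) f) y i))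
        = ∏ k : Fin n, g (f k) (y k) := by
    intro y
    rw [← Equiv.prod_comp f (fun i => g i ((MeasurableEquiv.piCongrLeft (fun _ : ι => ℝ) f) y i))]
    apply Finset.prod_congr rfl
    intro k _
    congr 1
    exact Equiv.piCongrLeft_apply_apply (fun _ : ι => ℝ) f y k
  calc ∫⁻ x, ∏ i, g i (x i) ∂(Measure.pi fun _ : ι => (volume : Measure ℝ))
      = ∫⁻ y, ∏ i, g i ((MeasurableEquiv.piCongrLeft (fun _ : ι => ℝ) f) y i)
          ∂(Measure.pi fun _ : Fin n => (volume : Measure ℝ)) := by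
        rw [← hmp.lintegral_comp (Finset.measurable_prod _ fun i _ => by fun_prop)]
    _ = ∫⁻ y, ∏ k : Fin n, g (f k) (y k) ∂(Measure.pi fun _ : Fin n => (volume : Measure ℝ)) := by
        simp_rw [key]
    _ = ∏ k : Fin n, ∫⁻ y, g (f k) y := lintegral_pi_fin n _ (fun k => hg _)
    _ = ∏ i, ∫⁻ y, g i y := Equiv.prod_comp f (fun i => ∫⁻ y, g i y)

lemma pi_gauss_withDensity {ι : Type*} [Fintype ι] :
    (Measure.pi fun _ : ι => gaussianReal 0 1)
      = (volume : Measure (ι → ℝ)).withDensity (fun x => ∏ i, gaussianPDF 0 1 (x i)) := by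
  classical
  refine Measure.pi_eq fun s hs => ?_
  rw [withDensity_apply _ (MeasurableSet.univ_pi hs)]
  rw [MeasureTheory.volume_pi]
  rw [← lintegral_indicator (MeasurableSet.univ_pi hs)]
  have key : ∀ x : ι → ℝ, (Set.univ.pi s).indicator (fun x => ∏ i, gaussianPDF 0 1 (x i)) x
      = ∏ i, (s i).indicator (gaussianPDF 0 1) (x i) := by
    intro x
    by_cases hx : x ∈ Set.univ.pi s
    · rw [Set.indicator_of_mem hx]
      exact Finset.prod_congr rfl fun i _ => (Set.indicator_of_mem (hx i (Set.mem_univ i)) _).symm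
    · rw [Set.indicator_of_notMem hx]
      rw [Set.mem_univ_pi] at hx
      push_neg at hx
      obtain ⟨i, hi⟩ := hx
      exact (Finset.prod_eq_zero (Finset.mem_univ i) (by rw [Set.indicator_of_notMem hi])).symm
  simp_rw [key]
  rw [lintegral_pi_prod _ (fun i => (measurable_gaussianPDF 0 1).indicator (hs i))]
  refine Finset.prod_congr rfl fun i _ => ?_
  rw [lintegral_indicator (hs i), gaussianReal_of_var_ne_zero 0 one_ne_zero,
    withDensity_apply _ (hs i)]

lemma map_affine_withDensity {ι : Type*} [Fintype ι] [DecidableEq ι]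
    (B : Matrix ι ι ℝ) (hB : B.det ≠ 0) (M : ι → ℝ) (φ : (ι → ℝ) → ENNReal)
    (hφ : Measurable φ) :
    Measure.map (fun z => B.mulVec z + M) (volume.withDensity φ)
      = volume.withDensity
          (fun y => ENNReal.ofReal |B.det|⁻¹ * φ (B⁻¹.mulVec (y - M))) := by
  have hBinv : B⁻¹ * B = 1 := Matrix.nonsing_inv_mul B (Ne.isUnit hB)
  have hBinv' : B * B⁻¹ = 1 := Matrix.mul_nonsing_inv B (Ne.isUnit hB)
  set T : (ι → ℝ) → (ι → ℝ) := fun z => B.mulVec z + M with hT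
  set Tinv : (ι → ℝ) → (ι → ℝ) := fun y => B⁻¹.mulVec (y - M) with hTinv
  have hTmeas : Measurable T := by
    apply Measurable.add_const
    exact (Matrix.mulVecLin B).continuous_of_finiteDimensional.measurable
  have hTinvmeas : Measurable Tinv := by
    apply ((Matrix.mulVecLin B⁻¹).continuous_of_finiteDimensional.measurable).comp
    exact measurable_id.sub_const M
  have hTinvT : ∀ z, Tinv (T z) = z := by
    intro z
    simp only [hT, hTinv, add_sub_cancel_right, Matrix.mulVec_mulVec, hBinv, Matrix.one_mulVec]
  -- compute map T volume
  have hmapvol : Measure.map T (volume : Measure (ι → ℝ))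
      = ENNReal.ofReal |B.det|⁻¹ • (volume : Measure (ι → ℝ)) := by
    have h1 : T = (fun y => y + M) ∘ (Matrix.toLin' B) := by
      funext z
      simp [hT, Matrix.toLin'_apply]
    rw [h1, ← Measure.map_map (f := ⇑(Matrix.toLin' B)) (measurable_id'.add_const M)
      ((Matrix.mulVecLin B).continuous_of_finiteDimensional.measurable),
      Real.map_matrix_volume_pi_eq_smul_volume_pi hB, Measure.map_smul,
      map_add_right_eq_self (volume : Measure (ι → ℝ)) M, abs_inv]
  ext s hs
  rw [Measure.map_apply hTmeas hs, withDensity_apply _ (hTmeas hs), withDensity_apply _ hs]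
  rw [← lintegral_indicator (hTmeas hs), ← lintegral_indicator hs]
  have key : ∀ z, (T ⁻¹' s).indicator φ z = s.indicator (fun y => φ (Tinv y)) (T z) := by
    intro z
    by_cases hz : T z ∈ s
    · rw [Set.indicator_of_mem hz, Set.indicator_of_mem (by exact hz), hTinvT]
    · rw [Set.indicator_of_notMem hz, Set.indicator_of_notMem (by exact hz)]
  simp_rw [key]
  have hmble : Measurable (s.indicator (fun y => φ (Tinv y))) :=
    (hφ.comp hTinvmeas).indicator hs
  rw [← lintegral_map hmble hTmeas, hmapvol, lintegral_smul_measure, smul_eq_mul,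
    ← lintegral_const_mul _ hmble]
  congr 1
  funext y
  by_cases hy : y ∈ s
  · rw [Set.indicator_of_mem hy, Set.indicator_of_mem hy]
  · rw [Set.indicator_of_notMem hy, Set.indicator_of_notMem hy, mul_zero]

lemma map_affine_pi_gauss {ι : Type*} [Fintype ι] [DecidableEq ι]
    (B : Matrix ι ι ℝ) (hB : B.det ≠ 0) (M : ι → ℝ) :
    Measure.map (fun z : ι → ℝ => B.mulVec z + M) (Measure.pi fun _ : ι => gaussianReal 0 1)
      = (volume : Measure (ι → ℝ)).withDensity (fun y => ENNReal.ofReal (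
          (2 * Real.pi) ^ (-(Fintype.card ι : ℝ) / 2) * (B * Bᵀ).det ^ (-(1:ℝ)/2) *
          Real.exp (-((y - M) ⬝ᵥ (B * Bᵀ)⁻¹.mulVec (y - M)) / 2))) := by
  have hmeas : Measurable fun x : ι → ℝ => ∏ i, gaussianPDF 0 1 (x i) :=
    Finset.measurable_prod _ fun i _ => (measurable_gaussianPDF 0 1).comp (measurable_pi_apply i)
  rw [pi_gauss_withDensity, map_affine_withDensity B hB M _ hmeas]
  congr 1
  funext y
  set z : ι → ℝ := B⁻¹.mulVec (y - M) with hz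
  have h1 : ∀ i, gaussianPDF 0 1 (z i) = ENNReal.ofReal (gaussianPDFReal 0 1 (z i)) := fun i => rfl
  simp_rw [h1]
  rw [← ENNReal.ofReal_prod_of_nonneg (fun i _ => gaussianPDFReal_nonneg 0 1 (z i)),
    ← ENNReal.ofReal_mul (by positivity)]
  congr 1
  have h2 : ∀ i, gaussianPDFReal 0 1 (z i) = (√(2 * π))⁻¹ * Real.exp (-(z i)^2 / 2) := by
    intro i
    simp [gaussianPDFReal]
  simp_rw [h2]
  rw [Finset.prod_mul_distrib, Finset.prod_const, ← Real.exp_sum, Finset.card_univ]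
  have hconst : ((√(2 * π))⁻¹ : ℝ) ^ (Fintype.card ι) = (2 * π) ^ (-(Fintype.card ι : ℝ) / 2) := by
    rw [Real.sqrt_eq_rpow, ← Real.rpow_neg_one ((2*π) ^ ((1:ℝ)/2)),
      ← Real.rpow_natCast (((2*π) ^ ((1:ℝ)/2)) ^ (-1:ℝ)) (Fintype.card ι),
      ← Real.rpow_mul (by positivity), ← Real.rpow_mul (by positivity)]
    congr 1
    ring
  have hdet : ((B * Bᵀ).det : ℝ) ^ (-(1:ℝ)/2) = |B.det|⁻¹ := by
    rw [Matrix.det_mul, Matrix.det_transpose, ← sq, ← sq_abs,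
      ← Real.rpow_natCast |B.det| 2, ← Real.rpow_mul (abs_nonneg _)]
    norm_num [Real.rpow_neg_one]
  have hquad : (∑ i, -(z i)^2 / 2) = -((y - M) ⬝ᵥ (B * Bᵀ)⁻¹.mulVec (y - M)) / 2 := by
    have hBB : (B * Bᵀ)⁻¹ = (B⁻¹)ᵀ * B⁻¹ := by
      rw [Matrix.mul_inv_rev, Matrix.transpose_nonsing_inv]
    rw [hBB, ← Matrix.mulVec_mulVec, Matrix.dotProduct_mulVec _ (B⁻¹)ᵀ,
      Matrix.vecMul_transpose]
    have : (B⁻¹ *ᵥ (y - M)) ⬝ᵥ (B⁻¹ *ᵥ (y - M)) = ∑ i, (z i)^2 := by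
      simp [dotProduct, hz, sq]
    rw [this, neg_div, ← Finset.sum_div, Finset.sum_neg_distrib, neg_div]
  rw [hconst, hdet, hquad]
  ring

lemma rotation_invariant {ι : Type*} [Fintype ι] [DecidableEq ι]
    (R : Matrix ι ι ℝ) (hR : R * Rᵀ = 1) :
    Measure.map (fun z : ι → ℝ => R.mulVec z) (Measure.pi fun _ : ι => gaussianReal 0 1)
      = Measure.pi fun _ : ι => gaussianReal 0 1 := by
  have hdet : R.det ≠ 0 := by
    intro h
    have := congrArg Matrix.det hR
    rw [Matrix.det_mul, Matrix.det_transpose, Matrix.det_one, h] at this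
    simpa using this
  have h0 : (fun z : ι → ℝ => R.mulVec z) = (fun z : ι → ℝ => R.mulVec z + 0) := by
    funext z; simp
  rw [h0, map_affine_pi_gauss R hdet 0, hR, pi_gauss_withDensity]
  congr 1
  funext y
  have hg : ∀ i, gaussianPDF 0 1 (y i) = ENNReal.ofReal (gaussianPDFReal 0 1 (y i)) :=
    fun i => rfl
  simp_rw [hg]
  rw [← ENNReal.ofReal_prod_of_nonneg (fun i _ => gaussianPDFReal_nonneg 0 1 (y i))]
  congr 1
  have h2 : ∀ i, gaussianPDFReal 0 1 (y i) = (√(2 * π))⁻¹ * Real.exp (-(y i)^2 / 2) := by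
    intro i
    simp [gaussianPDFReal]
  simp_rw [h2]
  rw [Finset.prod_mul_distrib, Finset.prod_const, ← Real.exp_sum, Finset.card_univ]
  have hconst : ((√(2 * π))⁻¹ : ℝ) ^ (Fintype.card ι) = (2 * π) ^ (-(Fintype.card ι : ℝ) / 2) := by
    rw [Real.sqrt_eq_rpow, ← Real.rpow_neg_one ((2*π) ^ ((1:ℝ)/2)),
      ← Real.rpow_natCast (((2*π) ^ ((1:ℝ)/2)) ^ (-1:ℝ)) (Fintype.card ι),
      ← Real.rpow_mul (by positivity), ← Real.rpow_mul (by positivity)]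
    congr 1
    ring
  have hquad : (y - 0) ⬝ᵥ (1:Matrix ι ι ℝ)⁻¹.mulVec (y - 0) = ∑ i, (y i)^2 := by
    simp [dotProduct, sq]
  rw [hquad, hconst, Matrix.det_one]
  have h3 : (∑ i, -(y i)^2/2) = -(∑ i, (y i)^2)/2 := by
    rw [← Finset.sum_div, Finset.sum_neg_distrib]
  rw [h3, Real.one_rpow, mul_one]

lemma map_eval_pi_gauss {ι : Type*} [Fintype ι] [DecidableEq ι] (i0 : ι) :
    Measure.map (fun x : ι → ℝ => x i0) (Measure.pi fun _ : ι => gaussianReal 0 1)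
      = gaussianReal 0 1 := by
  ext s hs
  rw [Measure.map_apply (measurable_pi_apply i0) hs]
  have : (fun x : ι → ℝ => x i0) ⁻¹' s = Set.univ.pi (Function.update (fun _ => Set.univ) i0 s) := by
    ext x
    simp only [Set.mem_preimage, Set.mem_pi, Set.mem_univ, forall_true_left]
    constructor
    · intro hx i
      by_cases h : i = i0
      · subst h; simpa using hx
      · simp [Function.update, h]
    · intro hx
      have := hx i0
      simpa [Function.update] using this
  rw [this, Measure.pi_pi]
  rw [Finset.prod_eq_single i0]
  · simp
  · intro b _ hb
    simp [Function.update, hb]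
  · simp

lemma map_linear_comb_pi_gauss {ι : Type*} [Fintype ι] [DecidableEq ι]
    (c : ι → ℝ) (σ : ℝ) (hσnn : 0 ≤ σ) (hσ : σ ^ 2 = ∑ i, c i ^ 2) :
    Measure.map (fun v : ι → ℝ => ∑ i, c i * v i) (Measure.pi fun _ : ι => gaussianReal 0 1)
      = gaussianReal 0 (NNReal.mk (σ ^ 2) (sq_nonneg σ) * 1) := by
  by_cases hσ0 : σ = 0
  · subst hσ0
    have hc : ∀ i, c i = 0 := by
      intro i
      have h0 : ∑ j, c j ^ 2 = 0 := by rw [← hσ]; norm_num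
      have := (Finset.sum_eq_zero_iff_of_nonneg (fun j _ => sq_nonneg (c j))).mp h0 i
        (Finset.mem_univ i)
      exact pow_eq_zero_iff two_ne_zero |>.mp this
    have hfun : (fun v : ι → ℝ => ∑ i, c i * v i) = fun _ => (0:ℝ) := by
      funext v
      simp [hc]
    rw [hfun, Measure.map_const]
    have : NNReal.mk ((0:ℝ) ^ 2) (sq_nonneg 0) * 1 = 0 := by
      ext; norm_num
    rw [this, gaussianReal_zero_var]
    simp
  · have hσpos : 0 < σ := lt_of_le_of_ne hσnn (Ne.symm hσ0)
    have hex : ∃ i, c i ≠ 0 := by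
      by_contra h
      push_neg at h
      rw [Finset.sum_eq_zero (fun i _ => by rw [h i]; ring)] at hσ
      exact hσ0 (pow_eq_zero_iff (two_ne_zero) |>.mp hσ)
    obtain ⟨i0, -⟩ := hex
    set u : EuclideanSpace ℝ ι := WithLp.toLp 2 (fun i => c i / σ) with hu
    have hnorm : ‖u‖ = 1 := by
      rw [EuclideanSpace.norm_eq]
      have : ∀ i, ‖u i‖ ^ 2 = c i ^ 2 / σ ^ 2 := by
        intro i
        rw [Real.norm_eq_abs, sq_abs, hu, PiLp.toLp_apply, div_pow]
      simp_rw [this]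
      rw [← Finset.sum_div, ← hσ, div_self (by positivity), Real.sqrt_one]
    have hv : Orthonormal ℝ (Set.restrict {i0} (fun _ : ι => u)) := by
      constructor
      · intro i; exact hnorm
      · intro i j hij
        exact absurd (Subtype.ext ((Set.eq_of_mem_singleton i.2).trans
          (Set.eq_of_mem_singleton j.2).symm)) hij
    obtain ⟨b, hb⟩ := hv.exists_orthonormalBasis_extension_of_card_eq
      (finrank_euclideanSpace (𝕜 := ℝ) (ι := ι))
    have hbi0 : b i0 = u := hb i0 (Set.mem_singleton i0)
    set R : Matrix ι ι ℝ := Matrix.of fun i j => b i j with hRdef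
    have hR : R * Rᵀ = 1 := by
      ext i k
      rw [Matrix.mul_apply, Matrix.one_apply]
      have hinner := orthonormal_iff_ite.mp b.orthonormal i k
      rw [PiLp.inner_apply] at hinner
      simp only [RCLike.inner_apply, starRingEnd_apply, star_trivial] at hinner
      simpa [hRdef, Matrix.transpose_apply, mul_comm] using hinner
    have hfun : (fun v : ι → ℝ => ∑ i, c i * v i)
        = (fun t : ℝ => σ * t) ∘ (fun x : ι → ℝ => x i0) ∘ (fun v : ι → ℝ => R.mulVec v) := by
      funext v
      simp only [Function.comp_apply, Matrix.mulVec, dotProduct, hRdef, Matrix.of_apply,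
        hbi0]
      rw [Finset.mul_sum]
      refine Finset.sum_congr rfl fun j _ => ?_
      rw [hu, PiLp.toLp_apply]
      field_simp
    rw [hfun]
    have hm1 : Measurable (fun v : ι → ℝ => R.mulVec v) :=
      (Matrix.mulVecLin R).continuous_of_finiteDimensional.measurable
    rw [show ((fun t : ℝ => σ * t) ∘ (fun x : ι → ℝ => x i0) ∘ (fun v : ι → ℝ => R.mulVec v))
        = ((fun t : ℝ => σ * t) ∘ (fun x : ι → ℝ => x i0)) ∘ (fun v : ι → ℝ => R.mulVec v) from rfl,
      ← Measure.map_map (f := fun v : ι → ℝ => R.mulVec v) (by fun_prop) hm1,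
      rotation_invariant R hR,
      ← Measure.map_map (measurable_const_mul σ) (measurable_pi_apply i0),
      map_eval_pi_gauss i0, gaussianReal_map_const_mul σ, mul_zero]

end Infrastructure

/-- Density of the multivariate Gaussian `N(M, S)` (for `S` positive definite) with
respect to Lebesgue measure. -/
def gaussDensity {m : ℕ} (M : Fin m → ℝ) (S : Matrix (Fin m) (Fin m) ℝ)
    (y : Fin m → ℝ) : ℝ :=
  (2 * Real.pi) ^ (-(m : ℝ) / 2) * S.det ^ (-(1 : ℝ) / 2) *
    Real.exp (-((y - M) ⬝ᵥ S⁻¹.mulVec (y - M)) / 2)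

/-- The nondegenerate multivariate Gaussian measure `N(M, S)` on `ℝ^m`. -/
def gaussMeasure {m : ℕ} (M : Fin m → ℝ) (S : Matrix (Fin m) (Fin m) ℝ) :
    Measure (Fin m → ℝ) :=
  volume.withDensity fun y => ENNReal.ofReal (gaussDensity M S y)


section Infrastructure2
open Real Set


lemma log_gaussDensity {m : ℕ} (M : Fin m → ℝ) {S : Matrix (Fin m) (Fin m) ℝ}
    (hS : 0 < S.det) (y : Fin m → ℝ) :
    Real.log (gaussDensity M S y) = (-(m : ℝ) / 2) * Real.log (2 * Real.pi)
      + (-(1 : ℝ) / 2) * Real.log S.det - ((y - M) ⬝ᵥ S⁻¹.mulVec (y - M)) / 2 := by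
  have h2π : (0:ℝ) < 2 * Real.pi := by positivity
  rw [gaussDensity, Real.log_mul (by positivity) (Real.exp_ne_zero _),
    Real.log_mul (by positivity) (by positivity), Real.log_rpow h2π, Real.log_rpow hS,
    Real.log_exp]
  ring

-- dot product helper
lemma dot_helper {m : ℕ} (P : Matrix (Fin m) (Fin m) ℝ) (a b : Fin m → ℝ) :
    (P.mulVec a) ⬝ᵥ b = a ⬝ᵥ (Pᵀ.mulVec b) := by
  rw [Matrix.dotProduct_mulVec, Matrix.vecMul_transpose]

theorem llr_pointwise {m : ℕ} (M0 M1 : Fin m → ℝ)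
    (S0 S1 sqrtS0 : Matrix (Fin m) (Fin m) ℝ)
    (hS0 : S0.PosDef) (hS1 : S1.PosDef)
    (hsqrt : sqrtS0.PosDef) (hsqrt2 : sqrtS0 * sqrtS0 = S0)
    (LLR : (Fin m → ℝ) → ℝ)
    (hLLR : ∀ y, LLR y = Real.log (gaussDensity M1 S1 y) - Real.log (gaussDensity M0 S0 y))
    (D : Fin m → ℝ) (hD : D = M1 - M0)
    (Ψ0 : Matrix (Fin m) (Fin m) ℝ) (lam : Fin m → ℝ)
    (hΨorth : Ψ0ᵀ * Ψ0 = 1)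
    (hdecomp : sqrtS0 * S1⁻¹ * sqrtS0 = Ψ0 * Matrix.diagonal lam * Ψ0ᵀ)
    (w : Fin m → ℝ) (hw : ∀ j, w j = (1 - lam j) / 2)
    (b0 : Fin m → ℝ) (hb0 : b0 = (Ψ0ᵀ * sqrtS0 * S1⁻¹).mulVec D)
    (K0 : Finset (Fin m)) (hK0 : ∀ j, j ∈ K0 ↔ w j ≠ 0)
    (ν : Fin m → ℝ) (hν : ∀ j ∈ K0, ν j = b0 j / (2 * w j))
    (C0 : ℝ)
    (hC0 : C0 = (Real.log (S0.det / S1.det) - D ⬝ᵥ S1⁻¹.mulVec D) / 2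
        - ∑ j ∈ K0, w j * (ν j) ^ 2) :
    ∀ z : Fin m → ℝ,
      LLR ((sqrtS0 * Ψ0).mulVec z + M0)
        = (∑ j ∈ K0, w j * (z j + ν j) ^ 2) + ((∑ j ∈ K0ᶜ, b0 j * z j) + C0) := by
  intro z
  set A : Matrix (Fin m) (Fin m) ℝ := sqrtS0 * Ψ0 with hA
  have hsym : sqrtS0ᵀ = sqrtS0 := by
    have h := hsqrt.1
    ext i j
    have := congrFun (congrFun h i) j
    simpa [Matrix.conjTranspose_apply] using this
  have hS1t : S1ᵀ = S1 := by
    have h := hS1.1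
    ext i j
    have := congrFun (congrFun h i) j
    simpa [Matrix.conjTranspose_apply] using this
  have hS1sym : S1⁻¹ᵀ = S1⁻¹ := by
    rw [Matrix.transpose_nonsing_inv, hS1t]
  have hsqrtdet : sqrtS0.det ≠ 0 := ne_of_gt hsqrt.det_pos
  have hsqrtinv : sqrtS0 * sqrtS0⁻¹ = 1 := Matrix.mul_nonsing_inv _ (Ne.isUnit hsqrtdet)
  have hsqrtinv' : sqrtS0⁻¹ * sqrtS0 = 1 := Matrix.nonsing_inv_mul _ (Ne.isUnit hsqrtdet)
  have hAt : Aᵀ = Ψ0ᵀ * sqrtS0 := by rw [hA, Matrix.transpose_mul, hsym]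
  -- Q0 computation
  have hQ0mat : Aᵀ * (S0⁻¹ * A) = 1 := by
    rw [hAt, hA, ← hsqrt2, Matrix.mul_inv_rev]
    calc Ψ0ᵀ * sqrtS0 * (sqrtS0⁻¹ * sqrtS0⁻¹ * (sqrtS0 * Ψ0))
        = Ψ0ᵀ * ((sqrtS0 * sqrtS0⁻¹) * (sqrtS0⁻¹ * sqrtS0) * Ψ0) := by
          noncomm_ring
      _ = 1 := by rw [hsqrtinv, hsqrtinv']; simpa using hΨorth
  have hQ1mat : Aᵀ * (S1⁻¹ * A) = Matrix.diagonal lam := by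
    rw [hAt, hA]
    calc Ψ0ᵀ * sqrtS0 * (S1⁻¹ * (sqrtS0 * Ψ0))
        = Ψ0ᵀ * (sqrtS0 * S1⁻¹ * sqrtS0) * Ψ0 := by noncomm_ring
      _ = Ψ0ᵀ * (Ψ0 * Matrix.diagonal lam * Ψ0ᵀ) * Ψ0 := by rw [hdecomp]
      _ = (Ψ0ᵀ * Ψ0) * Matrix.diagonal lam * (Ψ0ᵀ * Ψ0) := by noncomm_ring
      _ = Matrix.diagonal lam := by rw [hΨorth, Matrix.one_mul, Matrix.mul_one]
  have hcrossmat : Aᵀ * S1⁻¹ = Ψ0ᵀ * sqrtS0 * S1⁻¹ := by rw [hAt]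
  -- quadratic forms
  have hQ0 : (A.mulVec z) ⬝ᵥ S0⁻¹.mulVec (A.mulVec z) = ∑ j, z j * z j := by
    rw [Matrix.mulVec_mulVec, dot_helper, Matrix.mulVec_mulVec, hQ0mat, Matrix.one_mulVec]
    rfl
  have hQ1a : (A.mulVec z) ⬝ᵥ S1⁻¹.mulVec (A.mulVec z) = ∑ j, z j * (lam j * z j) := by
    rw [Matrix.mulVec_mulVec, dot_helper, Matrix.mulVec_mulVec, hQ1mat]
    simp [dotProduct, Matrix.mulVec_diagonal]
  have hcross1 : (A.mulVec z) ⬝ᵥ S1⁻¹.mulVec D = ∑ j, z j * b0 j := by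
    rw [dot_helper, Matrix.mulVec_mulVec, hcrossmat, ← hb0]
    rfl
  have hcross2 : D ⬝ᵥ S1⁻¹.mulVec (A.mulVec z) = ∑ j, z j * b0 j := by
    have h1 : D ⬝ᵥ S1⁻¹.mulVec (A.mulVec z) = (S1⁻¹.mulVec D) ⬝ᵥ (A.mulVec z) := by
      conv_lhs => rw [show S1⁻¹ = S1⁻¹ᵀᵀ from (Matrix.transpose_transpose _).symm]
      rw [← dot_helper, hS1sym]
    rw [h1, dotProduct_comm, dot_helper, Matrix.mulVec_mulVec, hcrossmat, ← hb0]
    rfl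
  have harg : A.mulVec z + M0 - M1 = A.mulVec z - D := by rw [hD]; abel
  have harg0 : A.mulVec z + M0 - M0 = A.mulVec z := by abel
  have hQ1 : (A.mulVec z + M0 - M1) ⬝ᵥ S1⁻¹.mulVec (A.mulVec z + M0 - M1)
      = ∑ j, z j * (lam j * z j) - 2 * (∑ j, z j * b0 j) + D ⬝ᵥ S1⁻¹.mulVec D := by
    rw [harg, Matrix.mulVec_sub, dotProduct_sub, sub_dotProduct,
      sub_dotProduct, hQ1a, hcross1, hcross2]
    ring
  have key : (∑ j, z j * z j)/2 - (∑ j, z j * (lam j * z j))/2 + ∑ j, z j * b0 j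
      = (∑ j ∈ K0, w j * (z j + ν j)^2) + (∑ j ∈ K0ᶜ, b0 j * z j)
          - ∑ j ∈ K0, w j * ν j ^ 2 := by
    have step1 : (∑ j, z j * z j)/2 - (∑ j, z j * (lam j * z j))/2 + ∑ j, z j * b0 j
        = ∑ j, (w j * (z j)^2 + b0 j * z j) := by
      rw [Finset.sum_div, Finset.sum_div, ← Finset.sum_sub_distrib, ← Finset.sum_add_distrib]
      refine Finset.sum_congr rfl fun j _ => ?_
      rw [hw j]
      ring
    rw [step1, ← Finset.sum_add_sum_compl K0 (fun j => w j * (z j)^2 + b0 j * z j)]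
    have hK0part : ∑ j ∈ K0, (w j * (z j)^2 + b0 j * z j)
        = (∑ j ∈ K0, w j * (z j + ν j)^2) - ∑ j ∈ K0, w j * ν j ^ 2 := by
      rw [← Finset.sum_sub_distrib]
      refine Finset.sum_congr rfl fun j hj => ?_
      have hwj : w j ≠ 0 := (hK0 j).mp hj
      have hb : b0 j = 2 * w j * ν j := by
        rw [hν j hj]
        field_simp
      rw [hb]
      ring
    have hK0cpart : ∑ j ∈ K0ᶜ, (w j * (z j)^2 + b0 j * z j) = ∑ j ∈ K0ᶜ, b0 j * z j := by
      refine Finset.sum_congr rfl fun j hj => ?_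
      have hwj : w j = 0 := not_not.mp ((hK0 j).not.mp (Finset.mem_compl.mp hj))
      rw [hwj]
      ring
    rw [hK0part, hK0cpart]
    ring
  rw [hLLR, log_gaussDensity M1 hS1.det_pos, log_gaussDensity M0 hS0.det_pos, hQ1, harg0, hQ0,
    hC0, Real.log_div (ne_of_gt hS0.det_pos) (ne_of_gt hS1.det_pos)]
  linarith [key]
end Infrastructure2

/-- Under `H₀`, i.e. `Y ~ N(M₀,S₀)`, the log-likelihood ratio
`LLR(Y) = log f₁(Y) − log f₀(Y)` has the same distribution as
`Σ_{j ∈ K₀} w_j (Z_j + ν_j)² + σ₀ Z' + C₀` where `Z'` and the `Z_j` are independent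
standard normal random variables, with `D = M₁−M₀`,
`Φ₀ = S₀^{1/2}S₁⁻¹S₀^{1/2} = Ψ₀ Λ Ψ₀ᵀ`, `w_j = (1−λ_j)/2`, `b₀ = Ψ₀ᵀS₀^{1/2}S₁⁻¹D`,
`K₀ = {j : w_j ≠ 0}`, `ν_j = b₀ⱼ/(2w_j)`, `σ₀² = Σ_{j∉K₀} b₀ⱼ²`, and
`C₀ = (log(det S₀/det S₁) − DᵀS₁⁻¹D)/2 − Σ_{j∈K₀} w_j ν_j²`. -/
theorem stmt4 {m : ℕ} (M0 M1 : Fin m → ℝ)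
    (S0 S1 sqrtS0 : Matrix (Fin m) (Fin m) ℝ)
    (hS0 : S0.PosDef) (hS1 : S1.PosDef)
    (hsqrt : sqrtS0.PosDef) (hsqrt2 : sqrtS0 * sqrtS0 = S0)
    (LLR : (Fin m → ℝ) → ℝ)
    (hLLR : ∀ y, LLR y = Real.log (gaussDensity M1 S1 y) - Real.log (gaussDensity M0 S0 y))
    (D : Fin m → ℝ) (hD : D = M1 - M0)
    (Ψ0 : Matrix (Fin m) (Fin m) ℝ) (lam : Fin m → ℝ)
    (hΨorth : Ψ0ᵀ * Ψ0 = 1)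
    (hdecomp : sqrtS0 * S1⁻¹ * sqrtS0 = Ψ0 * Matrix.diagonal lam * Ψ0ᵀ)
    (w : Fin m → ℝ) (hw : ∀ j, w j = (1 - lam j) / 2)
    (b0 : Fin m → ℝ) (hb0 : b0 = (Ψ0ᵀ * sqrtS0 * S1⁻¹).mulVec D)
    (K0 : Finset (Fin m)) (hK0 : ∀ j, j ∈ K0 ↔ w j ≠ 0)
    (ν : Fin m → ℝ) (hν : ∀ j ∈ K0, ν j = b0 j / (2 * w j))
    (σ0 : ℝ) (hσ0nn : 0 ≤ σ0) (hσ0 : σ0 ^ 2 = ∑ j ∈ K0ᶜ, (b0 j) ^ 2)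
    (C0 : ℝ)
    (hC0 : C0 = (Real.log (S0.det / S1.det) - D ⬝ᵥ S1⁻¹.mulVec D) / 2
        - ∑ j ∈ K0, w j * (ν j) ^ 2) :
    Measure.map LLR (gaussMeasure M0 S0) =
      Measure.map
        (fun z : (Fin m → ℝ) × ℝ =>
          (∑ j ∈ K0, w j * (z.1 j + ν j) ^ 2) + σ0 * z.2 + C0)
        ((Measure.pi fun _ : Fin m => gaussianReal 0 1).prod (gaussianReal 0 1)) := by
  classical
  -- basic matrix facts
  have hsym : sqrtS0ᵀ = sqrtS0 := by
    have h := hsqrt.1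
    ext i j
    have := congrFun (congrFun h i) j
    simpa [Matrix.conjTranspose_apply] using this
  have hΨΨt : Ψ0 * Ψ0ᵀ = 1 := mul_eq_one_comm.mp hΨorth
  have hΨdet : Ψ0.det ≠ 0 := by
    intro h
    have := congrArg Matrix.det hΨorth
    rw [Matrix.det_mul, Matrix.det_transpose, Matrix.det_one, h] at this
    simpa using this
  set A : Matrix (Fin m) (Fin m) ℝ := sqrtS0 * Ψ0 with hA
  have hAdet : A.det ≠ 0 := by
    rw [hA, Matrix.det_mul]
    exact mul_ne_zero (ne_of_gt hsqrt.det_pos) hΨdet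
  have hAAt : A * Aᵀ = S0 := by
    rw [hA, Matrix.transpose_mul, hsym]
    calc sqrtS0 * Ψ0 * (Ψ0ᵀ * sqrtS0) = sqrtS0 * (Ψ0 * Ψ0ᵀ) * sqrtS0 := by noncomm_ring
      _ = S0 := by rw [hΨΨt, Matrix.mul_one, hsqrt2]
  -- step 1 : gaussMeasure is an affine pushforward of iid gaussians
  have hstep1 : gaussMeasure M0 S0
      = Measure.map (fun z : Fin m → ℝ => A.mulVec z + M0)
          (Measure.pi fun _ : Fin m => gaussianReal 0 1) := by
    rw [map_affine_pi_gauss A hAdet M0, gaussMeasure]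
    congr 1
    funext y
    rw [hAAt, Fintype.card_fin, gaussDensity]
  -- measurability of LLR
  have hgdmeas : ∀ (M : Fin m → ℝ) (S : Matrix (Fin m) (Fin m) ℝ),
      Measurable (gaussDensity M S) := by
    intro M S
    unfold gaussDensity
    apply Measurable.mul measurable_const
    apply Measurable.exp
    apply Measurable.div_const
    apply Measurable.neg
    have : (fun y : Fin m → ℝ => (y - M) ⬝ᵥ S⁻¹.mulVec (y - M))
        = fun y : Fin m → ℝ => ∑ i, (y i - M i) * (∑ j, S⁻¹ i j * (y j - M j)) := by
      funext y
      simp [dotProduct, Matrix.mulVec]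
    rw [this]
    exact Finset.measurable_sum _ fun i _ =>
      (((measurable_pi_apply i).sub_const _).mul (Finset.measurable_sum _ fun j _ =>
        (measurable_const.mul ((measurable_pi_apply j).sub_const _))))
  have hLLRmeas : Measurable LLR := by
    have : LLR = fun y => Real.log (gaussDensity M1 S1 y) - Real.log (gaussDensity M0 S0 y) :=
      funext hLLR
    rw [this]
    exact (Real.measurable_log.comp (hgdmeas M1 S1)).sub
      (Real.measurable_log.comp (hgdmeas M0 S0))
  have hTmeas : Measurable (fun z : Fin m → ℝ => A.mulVec z + M0) :=
    ((Matrix.mulVecLin A).continuous_of_finiteDimensional.measurable).add_const M0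
  rw [hstep1, Measure.map_map hLLRmeas hTmeas]
  have hpoint := llr_pointwise M0 M1 S0 S1 sqrtS0 hS0 hS1 hsqrt hsqrt2 LLR hLLR D hD Ψ0 lam
    hΨorth hdecomp w hw b0 hb0 K0 hK0 ν hν C0 hC0
  have hfun1 : LLR ∘ (fun z : Fin m → ℝ => A.mulVec z + M0)
      = fun z : Fin m → ℝ =>
          (∑ j ∈ K0, w j * (z j + ν j) ^ 2) + ((∑ j ∈ K0ᶜ, b0 j * z j) + C0) :=
    funext hpoint
  rw [hfun1]
  -- split the coordinates
  have hsplit := measurePreserving_piEquivPiSubtypeProd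
    (fun _ : Fin m => gaussianReal 0 1) (fun j => j ∈ K0)
  set e := MeasurableEquiv.piEquivPiSubtypeProd (fun _ : Fin m => ℝ) (fun j => j ∈ K0) with he
  set H : ({j : Fin m // j ∈ K0} → ℝ) → ℝ :=
    fun u => (∑ j : {j : Fin m // j ∈ K0}, w j * (u j + ν j) ^ 2) + C0 with hH
  set L : ({j : Fin m // ¬ j ∈ K0} → ℝ) → ℝ :=
    fun v => ∑ j : {j : Fin m // ¬ j ∈ K0}, b0 j * v j with hLdef
  have hHmeas : Measurable H := by
    apply Measurable.add_const
    exact Finset.measurable_sum _ fun j _ => by fun_prop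
  have hLmeas : Measurable L := Finset.measurable_sum _ fun j _ => by fun_prop
  have hsum1 : ∀ z : Fin m → ℝ,
      ∑ j ∈ K0, w j * (z j + ν j) ^ 2 = ∑ j : {j : Fin m // j ∈ K0}, w j * (z j + ν j) ^ 2 :=
    fun z => Finset.sum_subtype K0 (fun x => Iff.rfl) _
  have hsum2 : ∀ z : Fin m → ℝ,
      ∑ j ∈ K0ᶜ, b0 j * z j = ∑ j : {j : Fin m // ¬ j ∈ K0}, b0 j * z j :=
    fun z => Finset.sum_subtype K0ᶜ (fun x => Finset.mem_compl) _
  have hfun2 : (fun z : Fin m → ℝ =>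
        (∑ j ∈ K0, w j * (z j + ν j) ^ 2) + ((∑ j ∈ K0ᶜ, b0 j * z j) + C0))
      = (fun q : ({j : Fin m // j ∈ K0} → ℝ) × ({j : Fin m // ¬ j ∈ K0} → ℝ) =>
          H q.1 + L q.2) ∘ e := by
    funext z
    simp only [Function.comp_apply, hH, hLdef]
    rw [hsum1 z, hsum2 z]
    have h1 : ∀ j : {j : Fin m // j ∈ K0}, (e z).1 j = z j := fun j => rfl
    have h2 : ∀ j : {j : Fin m // ¬ j ∈ K0}, (e z).2 j = z j := fun j => rfl
    simp_rw [h1, h2]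
    abel
  have hqmeas : Measurable (fun q : ({j : Fin m // j ∈ K0} → ℝ) × ({j : Fin m // ¬ j ∈ K0} → ℝ) =>
      H q.1 + L q.2) := (hHmeas.comp measurable_fst).add (hLmeas.comp measurable_snd)
  have haddmeas : Measurable (fun r : ℝ × ℝ => r.1 + r.2) :=
    measurable_fst.add measurable_snd
  have hpmapmeas : Measurable (Prod.map H L) := hHmeas.prodMap hLmeas
  rw [hfun2, ← Measure.map_map hqmeas e.measurable, hsplit.map_eq]
  have hLpush : Measure.map L (Measure.pi fun _ : {j : Fin m // ¬ j ∈ K0} => gaussianReal 0 1)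
      = gaussianReal 0 (NNReal.mk (σ0 ^ 2) (sq_nonneg σ0) * 1) := by
    rw [hLdef]
    exact map_linear_comb_pi_gauss (fun j : {j : Fin m // ¬ j ∈ K0} => b0 j) σ0 hσ0nn
      (hσ0.trans (Finset.sum_subtype K0ᶜ (fun x => Finset.mem_compl) _))
  have decompL : (fun q : ({j : Fin m // j ∈ K0} → ℝ) × ({j : Fin m // ¬ j ∈ K0} → ℝ) =>
      H q.1 + L q.2) = (fun r : ℝ × ℝ => r.1 + r.2) ∘ Prod.map H L := rfl
  rw [decompL, ← Measure.map_map haddmeas hpmapmeas,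
    ← Measure.map_prod_map _ _ hHmeas hLmeas, hLpush]
  -- the right-hand side
  have hrestrmeas : Measurable (fun z : Fin m → ℝ => fun j : {j : Fin m // j ∈ K0} => z j) :=
    measurable_pi_lambda _ fun j => measurable_pi_apply _
  have hRHS : (fun z : (Fin m → ℝ) × ℝ =>
        (∑ j ∈ K0, w j * (z.1 j + ν j) ^ 2) + σ0 * z.2 + C0)
      = (fun r : ℝ × ℝ => r.1 + r.2) ∘ Prod.map
          (H ∘ (fun z : Fin m → ℝ => fun j : {j : Fin m // j ∈ K0} => z j))
          (fun t : ℝ => σ0 * t) := by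
    funext q
    simp only [Function.comp_apply, Prod.map_fst, Prod.map_snd, hH]
    rw [hsum1 q.1]
    abel
  have hHr : Measurable (H ∘ (fun z : Fin m → ℝ => fun j : {j : Fin m // j ∈ K0} => z j)) :=
    hHmeas.comp hrestrmeas
  have hpmapmeas2 : Measurable (Prod.map
      (H ∘ (fun z : Fin m → ℝ => fun j : {j : Fin m // j ∈ K0} => z j)) (fun t : ℝ => σ0 * t)) :=
    hHr.prodMap (measurable_const_mul σ0)
  rw [hRHS, ← Measure.map_map haddmeas hpmapmeas2,
    ← Measure.map_prod_map _ _ hHr (measurable_const_mul σ0),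
    gaussianReal_map_const_mul σ0, mul_zero]
  have hrestr : Measure.map (fun z : Fin m → ℝ => fun j : {j : Fin m // j ∈ K0} => z j)
      (Measure.pi fun _ : Fin m => gaussianReal 0 1)
      = Measure.pi fun _ : {j : Fin m // j ∈ K0} => gaussianReal 0 1 := by
    have hco : (fun z : Fin m → ℝ => fun j : {j : Fin m // j ∈ K0} => z j)
        = Prod.fst ∘ e := rfl
    rw [hco, ← Measure.map_map measurable_fst e.measurable, hsplit.map_eq,
      Measure.map_fst_prod]
    simp only [measure_univ, one_smul]
    congr!
  rw [← Measure.map_map hHmeas hrestrmeas, hrestr]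
  congr!

end
end

section
/- Let μ₀ = N(M₀, S₀) and μ₁ = N(M₁, S₁) be nondegenerate multivariate Gaussian measures on ℝ^m with (M₀,S₀) ≠ (M₁,S₁), with densities f₀ and f₁. Then for every b ∈ (0,1) there exists κ > 0 such that μ₁({y ∈ ℝ^m : f₁(y) ≥ κ·f₀(y)}) = b. -/
open Matrix MeasureTheory Real
open scoped ENNReal
open scoped MatrixOrder

noncomputable section

lemma continuous_quadForm {m : ℕ} (M : Fin m → ℝ) (B : Matrix (Fin m) (Fin m) ℝ) :
    Continuous fun y : Fin m → ℝ => (y - M) ⬝ᵥ B.mulVec (y - M) := by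
  have : (fun y : Fin m → ℝ => (y - M) ⬝ᵥ B.mulVec (y - M))
      = fun y => ∑ i, (y i - M i) * (∑ j, B i j * (y j - M j)) := by
    ext y; simp [dotProduct, Matrix.mulVec]
  rw [this]
  fun_prop

lemma continuous_gaussDensity {m : ℕ} (M : Fin m → ℝ) (S : Matrix (Fin m) (Fin m) ℝ) :
    Continuous (gaussDensity M S) := by
  unfold gaussDensity
  exact continuous_const.mul (((continuous_quadForm M S⁻¹).neg.div_const 2).rexp)

lemma gaussDensity_pos {m : ℕ} (M : Fin m → ℝ) {S : Matrix (Fin m) (Fin m) ℝ}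
    (hS : S.PosDef) (y : Fin m → ℝ) : 0 < gaussDensity M S y :=
  mul_pos (mul_pos (rpow_pos_of_pos (by positivity) _)
    (rpow_pos_of_pos hS.det_pos _)) (Real.exp_pos _)

lemma sqrt_det {m : ℕ} {S : Matrix (Fin m) (Fin m) ℝ} (hS : S.PosDef) :
    |(CFC.sqrt S).det| = S.det ^ ((1:ℝ)/2) := by
  have hmul : CFC.sqrt S * CFC.sqrt S = S := CFC.sqrt_mul_sqrt_self S hS.posSemidef.nonneg
  have hdet2 : |(CFC.sqrt S).det| * |(CFC.sqrt S).det| = S.det := by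
    rw [← abs_mul, ← Matrix.det_mul, hmul, abs_of_pos hS.det_pos]
  rw [← Real.sqrt_eq_rpow, ← hdet2, Real.sqrt_mul_self (abs_nonneg _)]

lemma lintegral_gaussDensity {m : ℕ} (M : Fin m → ℝ) {S : Matrix (Fin m) (Fin m) ℝ}
    (hS : S.PosDef) : ∫⁻ y, ENNReal.ofReal (gaussDensity M S y) = 1 := by
  set A := CFC.sqrt S with hA
  have hAt : Aᵀ = A := by
    have h := (CFC.sqrt_nonneg S).posSemidef.isHermitian.eq
    rw [← hA] at h
    ext i j
    have h2 := congrFun (congrFun h j) i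
    rw [Matrix.transpose_apply]
    simpa [Matrix.conjTranspose_apply] using h2.symm
  have hmul : A * A = S := CFC.sqrt_mul_sqrt_self S hS.posSemidef.nonneg
  have hdetA : |A.det| = S.det ^ ((1:ℝ)/2) := sqrt_det hS
  have hdetA0 : A.det ≠ 0 := by
    intro h; rw [h] at hdetA; simp at hdetA
    exact absurd hdetA.symm (Real.rpow_pos_of_pos hS.det_pos _).ne'
  have hid : Aᵀ * (S⁻¹ * A) = 1 := by
    have h1 : A * A⁻¹ = 1 := Matrix.mul_nonsing_inv A hdetA0.isUnit
    have h2 : A⁻¹ * A = 1 := Matrix.nonsing_inv_mul A hdetA0.isUnit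
    calc Aᵀ * (S⁻¹ * A) = (A * A⁻¹) * (A⁻¹ * A) := by
          rw [hAt, ← hmul, Matrix.mul_inv_rev]; noncomm_ring
      _ = 1 := by rw [h1, h2, Matrix.one_mul]
  -- centered density function
  set g : (Fin m → ℝ) → ℝ≥0∞ := fun z => ENNReal.ofReal (Real.exp (-(z ⬝ᵥ S⁻¹.mulVec z) / 2))
    with hg
  have hgmeas : Measurable g := by
    apply ENNReal.measurable_ofReal.comp
    have := ((continuous_quadForm (0 : Fin m → ℝ) S⁻¹).neg.div_const 2).rexp
    simpa using this.measurable
  have step1 : ∫⁻ y, ENNReal.ofReal (gaussDensity M S y)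
      = ENNReal.ofReal ((2 * Real.pi) ^ (-(m : ℝ) / 2) * S.det ^ (-(1 : ℝ) / 2))
        * ∫⁻ y, g (y - M) := by
    rw [← lintegral_const_mul' _ _ ENNReal.ofReal_ne_top]
    congr 1 with y
    rw [hg]
    simp only [gaussDensity]
    rw [← ENNReal.ofReal_mul (mul_nonneg (Real.rpow_nonneg (by positivity) _) (Real.rpow_nonneg hS.det_pos.le _))]
  have step2 : ∫⁻ y, g (y - M) = ∫⁻ y, g y := by
    simp_rw [sub_eq_add_neg]
    exact lintegral_add_right_eq_self g (-M)
  -- linear change of variables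
  have hmap : Measure.map (Matrix.toLin' A) volume
      = ENNReal.ofReal |A.det|⁻¹ • volume := by
    rw [← abs_inv]
    exact Real.map_matrix_volume_pi_eq_smul_volume_pi hdetA0
  have step3 : ENNReal.ofReal |A.det|⁻¹ * ∫⁻ y, g y = ∫⁻ x, g (Matrix.toLin' A x) := by
    rw [← smul_eq_mul, ← lintegral_smul_measure, ← hmap,
      lintegral_map hgmeas (Matrix.toLin' A).continuous_of_finiteDimensional.measurable]
  have key : ∀ x : Fin m → ℝ, (A.mulVec x) ⬝ᵥ S⁻¹.mulVec (A.mulVec x) = x ⬝ᵥ x := by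
    intro x
    rw [Matrix.mulVec_mulVec, Matrix.dotProduct_mulVec, ← Matrix.vecMul_transpose,
      Matrix.vecMul_vecMul, hid, Matrix.vecMul_one]
  have step4 : ∫⁻ x, g (Matrix.toLin' A x)
      = ∫⁻ x : Fin m → ℝ, ENNReal.ofReal (Real.exp (-(x ⬝ᵥ x) / 2)) := by
    congr 1 with x
    rw [hg]
    simp only [Matrix.toLin'_apply, key]
  have hnormsq : ∀ v : EuclideanSpace ℝ (Fin m), ‖v‖^2 = ∑ i, v i * v i := by
    intro v
    rw [EuclideanSpace.norm_eq, Real.sq_sqrt (Finset.sum_nonneg fun i _ => by positivity)]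
    simp [sq]
  have hint : Integrable (fun v : EuclideanSpace ℝ (Fin m) =>
      Real.exp (-(1/2 : ℝ) * ‖v‖^2)) := by
    have h := (GaussianFourier.integrable_cexp_neg_mul_sq_norm_add (V := EuclideanSpace ℝ (Fin m))
      (b := (1/2 : ℂ)) (by norm_num) 0 0).norm
    convert h using 2 with v
    rw [Complex.norm_exp]
    congr 1
    simp [Complex.add_re, Complex.mul_re]
    norm_cast
  have hval : ∫ v : EuclideanSpace ℝ (Fin m), Real.exp (-(1/2 : ℝ) * ‖v‖^2)
      = (Real.pi / (1/2 : ℝ)) ^ ((m : ℝ) / 2) := by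
    have h := GaussianFourier.integral_rexp_neg_mul_sq_norm (V := EuclideanSpace ℝ (Fin m))
      (b := (1/2 : ℝ)) (by norm_num)
    simpa [finrank_euclideanSpace_fin] using h
  have step5 : ∫⁻ x : Fin m → ℝ, ENNReal.ofReal (Real.exp (-(x ⬝ᵥ x) / 2))
      = ENNReal.ofReal ((Real.pi / (1/2 : ℝ)) ^ ((m : ℝ) / 2)) := by
    have e := EuclideanSpace.volume_preserving_symm_measurableEquiv_toLp (Fin m)
    have hmeas : Measurable fun x : Fin m → ℝ => ENNReal.ofReal (Real.exp (-(x ⬝ᵥ x) / 2)) := by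
      apply ENNReal.measurable_ofReal.comp
      have : Continuous fun x : Fin m → ℝ => Real.exp (-(x ⬝ᵥ x) / 2) := by
        have h0 := ((continuous_quadForm (0 : Fin m → ℝ) 1).neg.div_const 2).rexp
        simpa using h0
      exact this.measurable
    have hev : ∀ v : EuclideanSpace ℝ (Fin m),
        ENNReal.ofReal (Real.exp (-((MeasurableEquiv.toLp 2 (Fin m → ℝ)).symm v ⬝ᵥ
          (MeasurableEquiv.toLp 2 (Fin m → ℝ)).symm v) / 2))
        = ENNReal.ofReal (Real.exp (-(1/2 : ℝ) * ‖v‖^2)) := by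
      intro v
      have hvv : (MeasurableEquiv.toLp 2 (Fin m → ℝ)).symm v ⬝ᵥ
          (MeasurableEquiv.toLp 2 (Fin m → ℝ)).symm v = ∑ i, v i * v i := by
        simp [dotProduct]
      rw [hvv, ← hnormsq]
      ring_nf
    rw [← e.lintegral_comp hmeas]
    simp_rw [hev]
    rw [← ofReal_integral_eq_lintegral_ofReal hint
      (Filter.Eventually.of_forall fun v => Real.exp_nonneg _), hval]
  have habs : 0 < |A.det| := abs_pos.mpr hdetA0
  have hcc : ENNReal.ofReal |A.det| * ENNReal.ofReal |A.det|⁻¹ = 1 := by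
    rw [← ENNReal.ofReal_mul habs.le, mul_inv_cancel₀ habs.ne']
    exact ENNReal.ofReal_one
  have step3' : ∫⁻ y, g y = ENNReal.ofReal |A.det| * ∫⁻ x, g (Matrix.toLin' A x) := by
    rw [← step3, ← mul_assoc, hcc, one_mul]
  rw [step1, step2, step3', step4, step5]
  rw [← ENNReal.ofReal_mul habs.le, ← ENNReal.ofReal_mul
    (mul_nonneg (Real.rpow_nonneg (by positivity) _) (Real.rpow_nonneg hS.det_pos.le _))]
  have h2pi : (0:ℝ) < 2 * Real.pi := by positivity
  have e1 : (2*Real.pi)^(-(m:ℝ)/2) * (2*Real.pi)^((m:ℝ)/2) = 1 := by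
    rw [← Real.rpow_add h2pi, show -(m:ℝ)/2 + (m:ℝ)/2 = 0 by ring, Real.rpow_zero]
  have e2 : S.det^(-(1:ℝ)/2) * S.det^((1:ℝ)/2) = 1 := by
    rw [← Real.rpow_add hS.det_pos, show -(1:ℝ)/2 + (1:ℝ)/2 = 0 by ring, Real.rpow_zero]
  have : (2 * Real.pi) ^ (-(m : ℝ) / 2) * S.det ^ (-(1 : ℝ) / 2)
      * (|A.det| * (Real.pi / (1/2 : ℝ)) ^ ((m : ℝ) / 2)) = 1 := by
    rw [hdetA, show Real.pi / (1/2 : ℝ) = 2 * Real.pi by ring]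
    calc (2 * Real.pi) ^ (-(m:ℝ)/2) * S.det ^ (-(1:ℝ)/2)
        * (S.det ^ ((1:ℝ)/2) * (2*Real.pi) ^ ((m:ℝ)/2))
        = ((2*Real.pi)^(-(m:ℝ)/2) * (2*Real.pi)^((m:ℝ)/2))
          * (S.det^(-(1:ℝ)/2) * S.det^((1:ℝ)/2)) := by ring
      _ = 1 := by rw [e1, e2, mul_one]
  rw [this, ENNReal.ofReal_one]

lemma finite_roots (α β γ : ℝ) (h : α ≠ 0 ∨ β ≠ 0) :
    {s : ℝ | α * s^2 + β * s + γ = 0}.Finite := by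
  set p : Polynomial ℝ := Polynomial.C α * Polynomial.X^2 + Polynomial.C β * Polynomial.X
    + Polynomial.C γ with hp
  have hp0 : p ≠ 0 := by
    intro h0
    have hc2 : p.coeff 2 = α := by
      simp [hp, Polynomial.coeff_add, Polynomial.coeff_C_mul, Polynomial.coeff_X_pow,
        Polynomial.coeff_C, Polynomial.coeff_X]
    have hc1 : p.coeff 1 = β := by
      simp [hp, Polynomial.coeff_add, Polynomial.coeff_C_mul, Polynomial.coeff_X_pow,
        Polynomial.coeff_C, Polynomial.coeff_X]
    rw [h0] at hc2 hc1
    simp at hc2 hc1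
    rcases h with h | h
    · exact h hc2.symm
    · exact h hc1.symm
  have hfin := Polynomial.finite_setOf_isRoot hp0
  have hset : {s : ℝ | α * s^2 + β * s + γ = 0} = {s : ℝ | p.IsRoot s} := by
    ext s
    simp [hp, Polynomial.IsRoot]
  rw [hset]
  exact hfin

lemma null_level {m : ℕ} (v : Fin m → ℝ) (q : (Fin m → ℝ) → ℝ) (hq : Continuous q)
    (h : ∀ x, (volume {s : ℝ | q (x + s • v) = 0}) = 0) :
    volume {y : Fin m → ℝ | q y = 0} = 0 := by
  set c := volume {y : Fin m → ℝ | q y = 0} with hc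
  set A : Set (ℝ × (Fin m → ℝ)) := {p | q (p.2 + p.1 • v) = 0} with hAdef
  have hAmeas : MeasurableSet A := by
    have hcont : Continuous fun p : ℝ × (Fin m → ℝ) => q (p.2 + p.1 • v) :=
      hq.comp (continuous_snd.add (continuous_fst.smul continuous_const))
    exact hcont.measurable (measurableSet_singleton 0)
  set F : ℝ × (Fin m → ℝ) → ℝ≥0∞ := A.indicator 1 with hF
  have hFmeas : Measurable F := measurable_one.indicator hAmeas
  set f : ℝ → (Fin m → ℝ) → ℝ≥0∞ := fun s x => F (s, x) with hf
  have huncurry : Function.uncurry f = F := by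
    funext p; cases p; rfl
  have swap : ∫⁻ s, ∫⁻ x, f s x ∂volume ∂volume = ∫⁻ x, ∫⁻ s, f s x ∂volume ∂volume := by
    apply lintegral_lintegral_swap
    rw [huncurry]
    exact hFmeas.aemeasurable
  have side1 : ∫⁻ s, ∫⁻ x, f s x ∂volume ∂volume = c * ⊤ := by
    have hinner : ∀ s : ℝ, ∫⁻ x, f s x ∂volume = c := by
      intro s
      have hind : ∀ x, f s x = ({x : Fin m → ℝ | q (x + s • v) = 0}).indicator 1 x := by
        intro x
        simp only [hf, hF, Set.indicator_apply, hAdef, Set.mem_setOf_eq, Pi.one_apply]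
      simp_rw [hind]
      have hmeas2 : MeasurableSet {x : Fin m → ℝ | q (x + s • v) = 0} :=
        (hq.comp (continuous_id.add continuous_const)).measurable (measurableSet_singleton 0)
      rw [lintegral_indicator_one hmeas2]
      have hpre : {x : Fin m → ℝ | q (x + s • v) = 0}
          = (fun x : Fin m → ℝ => x + s • v) ⁻¹' {y | q y = 0} := rfl
      rw [hpre, measure_preimage_add_right]
    simp_rw [hinner]
    rw [lintegral_const]
    simp
  have side2 : ∫⁻ x, ∫⁻ s, f s x ∂volume ∂volume = 0 := by
    have hinner : ∀ x : Fin m → ℝ, ∫⁻ s, f s x ∂volume = 0 := by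
      intro x
      have hind : ∀ s, f s x = ({s : ℝ | q (x + s • v) = 0}).indicator 1 s := by
        intro s
        simp only [hf, hF, Set.indicator_apply, hAdef, Set.mem_setOf_eq, Pi.one_apply]
      simp_rw [hind]
      have hmeas2 : MeasurableSet {s : ℝ | q (x + s • v) = 0} :=
        (hq.comp (continuous_const.add (continuous_id.smul continuous_const))).measurable
          (measurableSet_singleton 0)
      rw [lintegral_indicator_one hmeas2]
      exact h x
    simp_rw [hinner]
    simp
  rw [swap, side2] at side1
  by_contra hc0
  rw [ENNReal.mul_top (fun h0 => hc0 h0)] at side1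
  exact ENNReal.top_ne_zero side1.symm

lemma quad_expand {m : ℕ} {B : Matrix (Fin m) (Fin m) ℝ} (hsym : Bᵀ = B)
    (Mv x v : Fin m → ℝ) (s : ℝ) :
    (x + s • v - Mv) ⬝ᵥ B *ᵥ (x + s • v - Mv)
      = (x - Mv) ⬝ᵥ B *ᵥ (x - Mv) + (2 * (v ⬝ᵥ B *ᵥ (x - Mv))) * s
        + (v ⬝ᵥ B *ᵥ v) * s^2 := by
  have hcross : (x - Mv) ⬝ᵥ B *ᵥ v = v ⬝ᵥ B *ᵥ (x - Mv) := by
    rw [Matrix.dotProduct_mulVec, ← Matrix.mulVec_transpose, hsym, dotProduct_comm]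
  have hrw : x + s • v - Mv = (x - Mv) + s • v := by
    abel
  rw [hrw]
  simp only [Matrix.mulVec_add, Matrix.mulVec_smul, add_dotProduct,
    dotProduct_add, smul_dotProduct, dotProduct_smul, smul_eq_mul, hcross]
  ring

lemma exists_quad_ne {m : ℕ} {B : Matrix (Fin m) (Fin m) ℝ} (hsym : Bᵀ = B) (hB : B ≠ 0) :
    ∃ v : Fin m → ℝ, v ⬝ᵥ B *ᵥ v ≠ 0 := by
  by_contra hcon
  push_neg at hcon
  apply hB
  ext i j
  have hsym' : B j i = B i j := by
    conv_lhs => rw [← hsym, Matrix.transpose_apply]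
  have hd : ∀ k l : Fin m, (Pi.single k (1:ℝ)) ⬝ᵥ B *ᵥ (Pi.single l 1) = B k l := by
    intro k l
    simp [Matrix.mulVec_single, dotProduct, Pi.single_apply, Finset.sum_ite_eq']
  have h3 := hcon (Pi.single i 1 + Pi.single j 1)
  have h1 := hcon (Pi.single i 1)
  have h2 := hcon (Pi.single j 1)
  rw [Matrix.mulVec_add, add_dotProduct, dotProduct_add,
    dotProduct_add, hd, hd, hd, hd] at h3
  rw [hd] at h1 h2
  simp only [Matrix.zero_apply]
  rw [h1, h2, hsym'] at h3
  linarith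

lemma null_aux {m : ℕ} (B0 B1 : Matrix (Fin m) (Fin m) ℝ) (hB0 : B0ᵀ = B0) (hB1 : B1ᵀ = B1)
    (M0 M1 : Fin m → ℝ) (C : ℝ) (v : Fin m → ℝ)
    (hv : ∀ x : Fin m → ℝ, ((v ⬝ᵥ B0 *ᵥ v - v ⬝ᵥ B1 *ᵥ v) / 2 ≠ 0)
      ∨ (v ⬝ᵥ B0 *ᵥ (x - M0) - v ⬝ᵥ B1 *ᵥ (x - M1) ≠ 0)) :
    volume {y : Fin m → ℝ |
      C + ((y - M0) ⬝ᵥ B0 *ᵥ (y - M0)) / 2 - ((y - M1) ⬝ᵥ B1 *ᵥ (y - M1)) / 2 = 0} = 0 := by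
  apply null_level v
  · exact (continuous_const.add ((continuous_quadForm M0 B0).div_const 2)).sub
      ((continuous_quadForm M1 B1).div_const 2)
  · intro x
    have hset : {s : ℝ | C + ((x + s • v - M0) ⬝ᵥ B0 *ᵥ (x + s • v - M0)) / 2
          - ((x + s • v - M1) ⬝ᵥ B1 *ᵥ (x + s • v - M1)) / 2 = 0}
        = {s : ℝ | ((v ⬝ᵥ B0 *ᵥ v - v ⬝ᵥ B1 *ᵥ v) / 2) * s^2
            + (v ⬝ᵥ B0 *ᵥ (x - M0) - v ⬝ᵥ B1 *ᵥ (x - M1)) * s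
            + (C + ((x - M0) ⬝ᵥ B0 *ᵥ (x - M0)) / 2
              - ((x - M1) ⬝ᵥ B1 *ᵥ (x - M1)) / 2) = 0} := by
      ext s
      rw [Set.mem_setOf_eq, Set.mem_setOf_eq, quad_expand hB0, quad_expand hB1]
      constructor <;> intro h <;> linarith
    rw [hset]
    exact Set.Finite.measure_zero (finite_roots _ _ _ (hv x)) volume

lemma sym_inv {m : ℕ} {S : Matrix (Fin m) (Fin m) ℝ} (hS : S.PosDef) : (S⁻¹)ᵀ = S⁻¹ := by
  have hsym : Sᵀ = S := by
    have h := hS.isHermitian.eq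
    ext i j
    have h2 := congrFun (congrFun h j) i
    rw [Matrix.transpose_apply]
    simpa [Matrix.conjTranspose_apply] using h2.symm
  rw [Matrix.transpose_nonsing_inv, hsym]

lemma gauss_loglr_level_null {m : ℕ} (M0 M1 : Fin m → ℝ) {S0 S1 : Matrix (Fin m) (Fin m) ℝ}
    (hS0 : S0.PosDef) (hS1 : S1.PosDef) (hne : (M0, S0) ≠ (M1, S1)) (t : ℝ) :
    volume {y : Fin m → ℝ | Real.log (gaussDensity M1 S1 y)
      - Real.log (gaussDensity M0 S0 y) = t} = 0 := by
  have hc0 : ((2 * Real.pi) ^ (-(m : ℝ) / 2) * S0.det ^ (-(1:ℝ)/2)) ≠ 0 :=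
    (mul_pos (Real.rpow_pos_of_pos (by positivity) _)
      (Real.rpow_pos_of_pos hS0.det_pos _)).ne'
  have hc1 : ((2 * Real.pi) ^ (-(m : ℝ) / 2) * S1.det ^ (-(1:ℝ)/2)) ≠ 0 :=
    (mul_pos (Real.rpow_pos_of_pos (by positivity) _)
      (Real.rpow_pos_of_pos hS1.det_pos _)).ne'
  set C : ℝ := Real.log ((2 * Real.pi) ^ (-(m : ℝ) / 2) * S1.det ^ (-(1:ℝ)/2))
    - Real.log ((2 * Real.pi) ^ (-(m : ℝ) / 2) * S0.det ^ (-(1:ℝ)/2)) - t with hC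
  have hq_eq : ∀ y : Fin m → ℝ, (Real.log (gaussDensity M1 S1 y)
        - Real.log (gaussDensity M0 S0 y) = t)
      ↔ (C + ((y - M0) ⬝ᵥ S0⁻¹ *ᵥ (y - M0)) / 2 - ((y - M1) ⬝ᵥ S1⁻¹ *ᵥ (y - M1)) / 2 = 0) := by
    intro y
    unfold gaussDensity
    rw [Real.log_mul hc1 (Real.exp_ne_zero _), Real.log_exp,
      Real.log_mul hc0 (Real.exp_ne_zero _), Real.log_exp, hC]
    constructor <;> intro h <;> linarith
  have hset : {y : Fin m → ℝ | Real.log (gaussDensity M1 S1 y)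
        - Real.log (gaussDensity M0 S0 y) = t}
      = {y : Fin m → ℝ |
        C + ((y - M0) ⬝ᵥ S0⁻¹ *ᵥ (y - M0)) / 2 - ((y - M1) ⬝ᵥ S1⁻¹ *ᵥ (y - M1)) / 2 = 0} := by
    ext y; exact hq_eq y
  rw [hset]
  have hB0 : (S0⁻¹)ᵀ = S0⁻¹ := sym_inv hS0
  have hB1 : (S1⁻¹)ᵀ = S1⁻¹ := sym_inv hS1
  by_cases hS : S0⁻¹ = S1⁻¹
  · -- same covariance, different means
    have hSS : S0 = S1 := by
      rw [← Matrix.nonsing_inv_nonsing_inv S0 hS0.det_pos.ne'.isUnit,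
        ← Matrix.nonsing_inv_nonsing_inv S1 hS1.det_pos.ne'.isUnit, hS]
    have hM : M0 ≠ M1 := by
      intro h
      exact hne (by rw [h, hSS])
    apply null_aux _ _ hB0 hB1 _ _ _ (M1 - M0)
    intro x
    right
    rw [hS]
    have hexp : (M1 - M0) ⬝ᵥ S1⁻¹ *ᵥ (x - M0) - (M1 - M0) ⬝ᵥ S1⁻¹ *ᵥ (x - M1)
        = (M1 - M0) ⬝ᵥ S1⁻¹ *ᵥ (M1 - M0) := by
      rw [← dotProduct_sub, ← Matrix.mulVec_sub]
      congr 2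
      abel_nf
    rw [hexp]
    have hpos := (hS1.inv).dotProduct_mulVec_pos (sub_ne_zero.mpr hM.symm)
    simpa using hpos.ne'
  · -- different precision matrices
    have hBne : S0⁻¹ - S1⁻¹ ≠ 0 := sub_ne_zero.mpr hS
    have hBsym : (S0⁻¹ - S1⁻¹)ᵀ = S0⁻¹ - S1⁻¹ := by
      rw [Matrix.transpose_sub, hB0, hB1]
    obtain ⟨v, hv⟩ := exists_quad_ne hBsym hBne
    apply null_aux _ _ hB0 hB1 _ _ _ v
    intro x
    left
    rw [Matrix.sub_mulVec, dotProduct_sub] at hv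
    intro h0
    apply hv
    linarith

lemma gaussMeasure_prob {m : ℕ} (M : Fin m → ℝ) {S : Matrix (Fin m) (Fin m) ℝ}
    (hS : S.PosDef) : IsProbabilityMeasure (gaussMeasure M S) := by
  constructor
  rw [gaussMeasure, withDensity_apply _ MeasurableSet.univ, setLIntegral_univ,
    lintegral_gaussDensity M hS]

/-- For nondegenerate Gaussian measures `μ₀ = N(M₀,S₀)` and `μ₁ = N(M₁,S₁)`
on `ℝ^m` with `(M₀,S₀) ≠ (M₁,S₁)` and densities `f₀, f₁`, for every `b ∈ (0,1)` there is
`κ > 0` with `μ₁({y : f₁(y) ≥ κ·f₀(y)}) = b`. -/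
theorem stmt7 {m : ℕ} (M0 M1 : Fin m → ℝ) (S0 S1 : Matrix (Fin m) (Fin m) ℝ)
    (hS0 : S0.PosDef) (hS1 : S1.PosDef) (hne : (M0, S0) ≠ (M1, S1))
    (b : ℝ) (hb : b ∈ Set.Ioo (0 : ℝ) 1) :
    ∃ κ : ℝ, 0 < κ ∧
      gaussMeasure M1 S1 {y | gaussDensity M1 S1 y ≥ κ * gaussDensity M0 S0 y} =
        ENNReal.ofReal b := by
  obtain ⟨hb0, hb1⟩ := hb
  set μ₁ := gaussMeasure M1 S1 with hmu
  have : IsProbabilityMeasure μ₁ := gaussMeasure_prob M1 hS1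
  set q : (Fin m → ℝ) → ℝ := fun y =>
    Real.log (gaussDensity M1 S1 y) - Real.log (gaussDensity M0 S0 y) with hqdef
  have hqcont : Continuous q := by
    apply Continuous.sub
    · exact (continuous_gaussDensity M1 S1).log (fun y => (gaussDensity_pos M1 hS1 y).ne')
    · exact (continuous_gaussDensity M0 S0).log (fun y => (gaussDensity_pos M0 hS0 y).ne')
  have hqmeas : Measurable q := hqcont.measurable
  set ν : Measure ℝ := μ₁.map q with hnu
  have : IsProbabilityMeasure ν := Measure.isProbabilityMeasure_map hqmeas.aemeasurable
  -- no atoms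
  have hatom : ∀ t : ℝ, ν {t} = 0 := by
    intro t
    rw [hnu, Measure.map_apply hqmeas (measurableSet_singleton t)]
    have hnull : volume {y : Fin m → ℝ | q y = t} = 0 :=
      gauss_loglr_level_null M0 M1 hS0 hS1 hne t
    have habs : μ₁ ≪ volume := withDensity_absolutelyContinuous volume _
    exact habs hnull
  -- continuity of the cdf
  have hcont : Continuous (ProbabilityTheory.cdf ν) := by
    rw [continuous_iff_continuousAt]
    intro t
    rw [(ProbabilityTheory.monotone_cdf ν).continuousAt_iff_leftLim_eq_rightLim,
      (ProbabilityTheory.cdf ν).rightLim_eq]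
    have hsing := (ProbabilityTheory.cdf ν).measure_singleton t
    rw [ProbabilityTheory.measure_cdf, hatom t] at hsing
    have hle : ProbabilityTheory.cdf ν t - Function.leftLim (ProbabilityTheory.cdf ν) t ≤ 0 :=
      ENNReal.ofReal_eq_zero.mp hsing.symm
    have hge : Function.leftLim (⇑(ProbabilityTheory.cdf ν)) t ≤ ProbabilityTheory.cdf ν t :=
      (ProbabilityTheory.monotone_cdf ν).leftLim_le le_rfl
    linarith
  -- find t with cdf = 1 - b
  obtain ⟨a1, ha1⟩ : ∃ a, ProbabilityTheory.cdf ν a < 1 - b :=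
    ((ProbabilityTheory.tendsto_cdf_atBot ν).eventually_lt_const
      (by linarith : (0:ℝ) < 1 - b)).exists
  obtain ⟨a2, ha2⟩ : ∃ a, 1 - b < ProbabilityTheory.cdf ν a :=
    ((ProbabilityTheory.tendsto_cdf_atTop ν).eventually_const_lt
      (by linarith : 1 - b < 1)).exists
  have ha12 : a1 ≤ a2 := by
    by_contra hcon
    push_neg at hcon
    exact absurd ((ProbabilityTheory.monotone_cdf ν) hcon.le) (by linarith)
  obtain ⟨t, _, ht⟩ := intermediate_value_Icc ha12 hcont.continuousOn
    (Set.mem_Icc.mpr ⟨ha1.le, ha2.le⟩)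
  -- conclude
  refine ⟨Real.exp t, Real.exp_pos t, ?_⟩
  have hsetE : {y : Fin m → ℝ | gaussDensity M1 S1 y ≥ Real.exp t * gaussDensity M0 S0 y}
      = q ⁻¹' Set.Ici t := by
    ext y
    have hf0 := gaussDensity_pos M0 hS0 y
    have hf1 := gaussDensity_pos M1 hS1 y
    simp only [Set.mem_setOf_eq, Set.mem_preimage, Set.mem_Ici, ge_iff_le, hqdef]
    rw [← Real.log_le_log_iff (by positivity) hf1, Real.log_mul (Real.exp_ne_zero t) hf0.ne',
      Real.log_exp]
    constructor <;> intro h <;> linarith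
  rw [hsetE, ← Measure.map_apply hqmeas measurableSet_Ici, ← hnu]
  have hIic : ν (Set.Iic t) = ENNReal.ofReal (1 - b) := by
    rw [← ProbabilityTheory.ofReal_cdf, ht]
  have hIio : ν (Set.Iio t) = ENNReal.ofReal (1 - b) := by
    rw [← hIic]
    refine le_antisymm (measure_mono Set.Iio_subset_Iic_self) ?_
    rw [← Set.Iio_insert, Set.insert_eq]
    exact (measure_union_le _ _).trans (by rw [hatom t, zero_add])
  rw [← Set.compl_Iio, measure_compl measurableSet_Iio (measure_ne_top ν _), hIio,
    measure_univ]
  rw [← ENNReal.ofReal_one, ← ENNReal.ofReal_sub _ (by linarith : (0:ℝ) ≤ 1 - b)]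
  norm_num

end
end

section
/- Let μ₀ and μ₁ be distinct probability measures on ℝ^m, both absolutely continuous with respect to Lebesgue measure. Then for every a ∈ (0,1) there exists a measurable set R ⊆ ℝ^m with μ₀(R) = a and μ₁(R) > a. -/
open MeasureTheory Filter Set Topology ENNReal


lemma ivt_Iic (ν : Measure ℝ) [IsFiniteMeasure ν] [NullSingletonClass ν] {c : ℝ≥0∞}
    (hc0 : 0 < c) (hcu : c < ν Set.univ) : ∃ t : ℝ, ν (Set.Iic t) = c := by
  set K : Set ℝ := {t | ν (Set.Iic t) ≤ c} with hK
  have hmono : ∀ {s t : ℝ}, s ≤ t → ν (Set.Iic s) ≤ ν (Set.Iic t) :=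
    fun h => measure_mono (Set.Iic_subset_Iic.2 h)
  -- nonempty
  have hbot : Tendsto (fun n : ℕ => ν (Set.Iic (-(n : ℝ)))) atTop (𝓝 0) := by
    have h1 : (⋂ n : ℕ, Set.Iic (-(n : ℝ))) = ∅ := by
      ext x
      simp only [Set.mem_iInter, Set.mem_Iic, Set.mem_empty_iff_false, iff_false, not_forall]
      obtain ⟨n, hn⟩ := exists_nat_gt (-x)
      exact ⟨n, by push_neg; linarith⟩
    have h2 := tendsto_measure_iInter_atTop (μ := ν) (s := fun n : ℕ => Set.Iic (-(n : ℝ)))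
      (fun n => measurableSet_Iic.nullMeasurableSet)
      (fun i j hij => Set.Iic_subset_Iic.2 (neg_le_neg (Nat.cast_le.2 hij)))
      ⟨0, measure_ne_top _ _⟩
    rw [h1, measure_empty] at h2
    exact h2
  obtain ⟨n, hn⟩ := (hbot.eventually_lt_const hc0).exists
  have hKne : K.Nonempty := ⟨-(n : ℝ), hn.le⟩
  obtain ⟨T, hT⟩ := ((tendsto_measure_Iic_atTop ν).eventually_const_lt hcu).exists
  have hKbdd : BddAbove K := by
    refine ⟨T, fun t ht => ?_⟩
    by_contra h
    push_neg at h
    exact absurd (hT.trans_le (hmono h.le)) (not_lt.2 ht)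
  set t0 := sSup K with ht0
  refine ⟨t0, le_antisymm ?_ ?_⟩
  · have hIio : ν (Set.Iio t0) ≤ c := by
      have hU : (⋃ n : ℕ, Set.Iic (t0 - 1 / (n + 1))) = Set.Iio t0 := by
        ext x
        simp only [Set.mem_iUnion, Set.mem_Iic, Set.mem_Iio]
        constructor
        · rintro ⟨n, hn⟩
          have h0 : (0 : ℝ) < 1 / ((n : ℝ) + 1) := by positivity
          linarith
        · intro hx
          obtain ⟨n, hn⟩ := exists_nat_one_div_lt (sub_pos.2 hx)
          exact ⟨n, by linarith⟩
      have hmonoU : Monotone fun n : ℕ => Set.Iic (t0 - 1 / ((n : ℝ) + 1)) := by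
        intro i j hij
        refine Set.Iic_subset_Iic.2 (by
          have : 1 / ((j : ℝ) + 1) ≤ 1 / ((i : ℝ) + 1) :=
            one_div_le_one_div_of_le (by positivity) (by exact_mod_cast add_le_add_left (Nat.cast_le.2 hij) 1)
          linarith)
      have h3 := tendsto_measure_iUnion_atTop (μ := ν) hmonoU
      rw [hU] at h3
      refine le_of_tendsto h3 (Eventually.of_forall fun n => ?_)
      have hlt : t0 - 1 / ((n : ℝ) + 1) < t0 := by
        have h0 : (0 : ℝ) < 1 / ((n : ℝ) + 1) := by positivity
        linarith
      obtain ⟨s, hsK, hs⟩ := exists_lt_of_lt_csSup hKne hlt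
      exact (hmono hs.le).trans hsK
    calc ν (Set.Iic t0) = ν (Set.Iio t0) := (measure_congr (Iio_ae_eq_Iic (μ := ν) (a := t0))).symm
    _ ≤ c := hIio
  · have hI : (⋂ n : ℕ, Set.Iic (t0 + 1 / ((n : ℝ) + 1))) = Set.Iic t0 := by
      ext x
      simp only [Set.mem_iInter, Set.mem_Iic]
      constructor
      · intro hx
        by_contra hxx
        push_neg at hxx
        obtain ⟨n, hn⟩ := exists_nat_one_div_lt (sub_pos.2 hxx)
        have := hx n
        linarith
      · intro hx n
        have h0 : (0 : ℝ) < 1 / ((n : ℝ) + 1) := by positivity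
        linarith
    have hanti : Antitone fun n : ℕ => Set.Iic (t0 + 1 / ((n : ℝ) + 1)) := by
      intro i j hij
      refine Set.Iic_subset_Iic.2 (by
        have : 1 / ((j : ℝ) + 1) ≤ 1 / ((i : ℝ) + 1) :=
          one_div_le_one_div_of_le (by positivity) (by exact_mod_cast add_le_add_left (Nat.cast_le.2 hij) 1)
        linarith)
    have h4 := tendsto_measure_iInter_atTop (μ := ν)
      (fun n => measurableSet_Iic.nullMeasurableSet) hanti ⟨0, measure_ne_top _ _⟩
    rw [hI] at h4
    refine ge_of_tendsto h4 (Eventually.of_forall fun n => ?_)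
    have hnot : t0 + 1 / ((n : ℝ) + 1) ∉ K := by
      intro hmem
      have := le_csSup hKbdd hmem
      have h0 : (0 : ℝ) < 1 / ((n : ℝ) + 1) := by positivity
      linarith
    exact (not_le.1 hnot).le


lemma slice_subset {m : ℕ} (hm : 0 < m) (μ : Measure (Fin m → ℝ)) [IsFiniteMeasure μ]
    (hac : μ ≪ volume) {S : Set (Fin m → ℝ)} (hS : MeasurableSet S) {c : ℝ≥0∞}
    (hc0 : 0 < c) (hcS : c < μ S) :
    ∃ T, T ⊆ S ∧ MeasurableSet T ∧ μ T = c := by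
  set i0 : Fin m := ⟨0, hm⟩
  have hproj : Measurable fun x : Fin m → ℝ => x i0 := measurable_pi_apply i0
  set ν : Measure ℝ := (μ.restrict S).map (fun x => x i0) with hν
  have hν_apply : ∀ t : ℝ, ν (Set.Iic t) = μ (S ∩ {x | x i0 ≤ t}) := by
    intro t
    rw [hν, Measure.map_apply hproj measurableSet_Iic, Measure.restrict_apply' hS]
    congr 1
    ext x
    simp [Set.mem_Iic, and_comm]
  have hνuniv : ν Set.univ = μ S := by
    rw [hν, Measure.map_apply hproj MeasurableSet.univ]
    simp
  haveI : IsFiniteMeasure ν := ⟨by rw [hνuniv]; exact measure_lt_top _ _⟩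
  haveI : NullSingletonClass ν := by
    refine ⟨fun t => ?_⟩
    have h1 : ν {t} ≤ μ {x : Fin m → ℝ | x i0 = t} := by
      rw [hν, Measure.map_apply hproj (measurableSet_singleton t)]
      refine le_trans (Measure.restrict_apply_le _ _) (le_of_eq ?_)
      congr 1
    have h2 : μ {x : Fin m → ℝ | x i0 = t} = 0 := by
      refine hac ?_
      rw [MeasureTheory.volume_pi]
      exact Measure.pi_hyperplane (fun _ => (volume : Measure ℝ)) i0 t
    exact le_antisymm (h1.trans h2.le) zero_le
  obtain ⟨t, ht⟩ := ivt_Iic ν hc0 (by rwa [hνuniv])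
  exact ⟨S ∩ {x | x i0 ≤ t}, Set.inter_subset_left,
    hS.inter (measurableSet_le hproj measurable_const),
    by rw [← hν_apply, ht]⟩
/-- If `μ₀ ≠ μ₁` are probability measures on `ℝ^m` admitting densities with
respect to Lebesgue measure, then for every `a ∈ (0,1)` there is a measurable set `R`
with `μ₀(R) = a` and `μ₁(R) > a`. -/
theorem stmt8 {m : ℕ} (μ0 μ1 : Measure (Fin m → ℝ))
    [IsProbabilityMeasure μ0] [IsProbabilityMeasure μ1]
    (f0 f1 : (Fin m → ℝ) → ℝ)
    (hμ0 : μ0 = volume.withDensity fun y => ENNReal.ofReal (f0 y))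
    (hμ1 : μ1 = volume.withDensity fun y => ENNReal.ofReal (f1 y))
    (hne : μ0 ≠ μ1)
    (a : ℝ) (ha : a ∈ Set.Ioo (0 : ℝ) 1) :
    ∃ R : Set (Fin m → ℝ), MeasurableSet R ∧
      μ0 R = ENNReal.ofReal a ∧ ENNReal.ofReal a < μ1 R := by
  obtain ⟨ha0, ha1⟩ := ha
  rcases Nat.eq_zero_or_pos m with hm | hm
  · exfalso
    subst hm
    haveI : Subsingleton (Fin 0 → ℝ) := ⟨fun f g => funext fun i => i.elim0⟩
    refine hne (Measure.ext fun s _ => ?_)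
    rcases s.eq_empty_or_nonempty with rfl | ⟨x, hx⟩
    · simp
    · have hsu : s = Set.univ := by
        ext y
        simp only [Set.mem_univ, iff_true]
        rwa [Subsingleton.elim y x]
      rw [hsu, measure_univ, measure_univ]
  have hac0 : μ0 ≪ volume := hμ0 ▸ withDensity_absolutelyContinuous _ _
  have hac1 : μ1 ≪ volume := hμ1 ▸ withDensity_absolutelyContinuous _ _
  set g0 := μ0.rnDeriv volume with hg0def
  set g1 := μ1.rnDeriv volume with hg1def
  have hg0m : Measurable g0 := Measure.measurable_rnDeriv _ _
  have hg1m : Measurable g1 := Measure.measurable_rnDeriv _ _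
  have h0 : volume.withDensity g0 = μ0 := Measure.withDensity_rnDeriv_eq _ _ hac0
  have h1 : volume.withDensity g1 = μ1 := Measure.withDensity_rnDeriv_eq _ _ hac1
  have hu : ∀ S : Set (Fin m → ℝ), MeasurableSet S → μ0 S = ∫⁻ x in S, g0 x := fun S hS => by
    rw [← h0, withDensity_apply _ hS]
  have hv : ∀ S : Set (Fin m → ℝ), MeasurableSet S → μ1 S = ∫⁻ x in S, g1 x := fun S hS => by
    rw [← h1, withDensity_apply _ hS]
  set B := {x | g0 x < g1 x} with hBdef
  set D := {x | g1 x < g0 x} with hDdef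
  set E := (B ∪ D)ᶜ with hEdef
  have hBm : MeasurableSet B := measurableSet_lt hg0m hg1m
  have hDm : MeasurableSet D := measurableSet_lt hg1m hg0m
  have hEm : MeasurableSet E := (hBm.union hDm).compl
  have hEeq : ∀ x ∈ E, g0 x = g1 x := by
    intro x hx
    simp only [hEdef, Set.mem_compl_iff, Set.mem_union, hBdef, hDdef, Set.mem_setOf_eq,
      not_or, not_lt] at hx
    exact le_antisymm hx.2 hx.1
  have hBDdisj : Disjoint B D := by
    rw [Set.disjoint_left]
    intro x hxB hxD
    have h1 : g0 x < g1 x := hxB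
    have h2 : g1 x < g0 x := hxD
    exact absurd h2 (not_lt.2 h1.le)
  have hBEdisj : Disjoint B E := disjoint_compl_right.mono_left Set.subset_union_left
  have hDEdisj : Disjoint D E := disjoint_compl_right.mono_left Set.subset_union_right
  have hcover : (B ∪ D) ∪ E = Set.univ := Set.union_compl_self _
  -- strict comparisons on subsets of B and D
  have hstrictB : ∀ S : Set (Fin m → ℝ), MeasurableSet S → S ⊆ B → volume S ≠ 0 →
      μ0 S < μ1 S := by
    intro S hSm hSB hS0
    rw [hu S hSm, hv S hSm]
    refine setLIntegral_strict_mono hSm hS0 hg1m ?_ (ae_of_all _ fun x hx => hSB hx)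
    rw [← hu S hSm]
    exact (measure_lt_top μ0 S).ne
  have hstrictD : ∀ S : Set (Fin m → ℝ), MeasurableSet S → S ⊆ D → volume S ≠ 0 →
      μ1 S < μ0 S := by
    intro S hSm hSD hS0
    rw [hu S hSm, hv S hSm]
    refine setLIntegral_strict_mono hSm hS0 hg0m ?_ (ae_of_all _ fun x hx => hSD hx)
    rw [← hv S hSm]
    exact (measure_lt_top μ1 S).ne
  -- equality on subsets of E
  have hEsub : ∀ T : Set (Fin m → ℝ), MeasurableSet T → T ⊆ E → μ0 T = μ1 T := by
    intro T hTm hTE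
    rw [hu T hTm, hv T hTm]
    exact setLIntegral_congr_fun hTm (fun x hx => hEeq x (hTE hx))
  have hEE : μ0 E = μ1 E := hEsub E hEm subset_rfl
  -- totals
  have hsum0 : (μ0 B + μ0 D) + μ0 E = 1 := by
    rw [← measure_union hBDdisj hDm, ← measure_union (disjoint_compl_right) hEm, hcover,
      measure_univ]
  have hsum1 : (μ1 B + μ1 D) + μ1 E = 1 := by
    rw [← measure_union hBDdisj hDm, ← measure_union (disjoint_compl_right) hEm, hcover,
      measure_univ]
  have hbal : μ0 B + μ0 D = μ1 B + μ1 D := by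
    have h2 : (μ0 B + μ0 D) + μ0 E = (μ1 B + μ1 D) + μ0 E := by
      rw [hsum0, hEE]
      exact hsum1.symm
    exact (ENNReal.add_left_inj (measure_ne_top μ0 E)).1 h2
  -- positivity of Lebesgue measure of B and D
  have hBDboth : ¬(volume B = 0 ∧ volume D = 0) := by
    rintro ⟨hB, hD⟩
    refine hne ?_
    rw [← h0, ← h1]
    refine withDensity_congr_ae ?_
    have hsub : {x | g0 x ≠ g1 x} ⊆ B ∪ D := by
      intro x hx
      rcases lt_or_gt_of_ne hx with h | h
      · exact Or.inl h
      · exact Or.inr h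
    exact measure_mono_null hsub (by rw [measure_union_null_iff]; exact ⟨hB, hD⟩)
  have hB0 : volume B ≠ 0 := by
    intro hB
    have hμ0B : μ0 B = 0 := hac0 hB
    have hμ1B : μ1 B = 0 := hac1 hB
    have hDeq : μ0 D = μ1 D := by rwa [hμ0B, hμ1B, zero_add, zero_add] at hbal
    by_cases hD : volume D = 0
    · exact hBDboth ⟨hB, hD⟩
    · exact absurd hDeq (hstrictD D hDm subset_rfl hD).ne'
  have hD0 : volume D ≠ 0 := by
    intro hD
    have hμ0D : μ0 D = 0 := hac0 hD
    have hμ1D : μ1 D = 0 := hac1 hD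
    have hBeq : μ0 B = μ1 B := by rwa [hμ0D, hμ1D, add_zero, add_zero] at hbal
    by_cases hB : volume B = 0
    · exact hBDboth ⟨hB, hD⟩
    · exact absurd hBeq (hstrictB B hBm subset_rfl hB).ne
  set A := ENNReal.ofReal a with hAdef
  have hA0 : 0 < A := ENNReal.ofReal_pos.2 ha0
  have hA1 : A < 1 := ENNReal.ofReal_lt_one.2 ha1
  rcases lt_trichotomy (μ0 B) A with hcase | hcase | hcase
  · -- μ0 B < A : need to add mass from E (and possibly D)
    set b := A - μ0 B with hbdef
    have hb0 : 0 < b := tsub_pos_of_lt hcase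
    have hbne : b ≠ ∞ := (le_trans tsub_le_self (le_of_lt hA1)).trans_lt ENNReal.one_lt_top |>.ne
    have hbadd : μ0 B + b = A := by
      rw [hbdef, add_comm]
      exact tsub_add_cancel_of_le hcase.le
    rcases lt_trichotomy b (μ0 E) with hEb | hEb | hEb
    · -- take a slice of E
      obtain ⟨T, hTE, hTm, hTval⟩ := slice_subset hm μ0 hac0 hEm hb0 hEb
      refine ⟨B ∪ T, hBm.union hTm, ?_, ?_⟩
      · rw [measure_union (hBEdisj.mono_right hTE) hTm, hTval, hbadd]
      · rw [measure_union (hBEdisj.mono_right hTE) hTm, ← hEsub T hTm hTE, hTval, ← hbadd]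
        exact ENNReal.add_lt_add_right hbne (hstrictB B hBm subset_rfl hB0)
    · -- take the whole of E
      refine ⟨B ∪ E, hBm.union hEm, ?_, ?_⟩
      · rw [measure_union hBEdisj hEm, ← hEb, hbadd]
      · rw [measure_union hBEdisj hEm, ← hEE, ← hEb, ← hbadd]
        exact ENNReal.add_lt_add_right hbne (hstrictB B hBm subset_rfl hB0)
    · -- need also a slice of D
      set c' := b - μ0 E with hc'def
      have hc'0 : 0 < c' := tsub_pos_of_lt hEb
      have hc'ne : c' ≠ ∞ := (tsub_le_self.trans_lt hbne.lt_top).ne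
      have hc'add : μ0 E + c' = b := by
        rw [hc'def, add_comm]
        exact tsub_add_cancel_of_le hEb.le
      have hc'D : c' < μ0 D := by
        have hlt : (μ0 B + μ0 E) + c' < (μ0 B + μ0 E) + μ0 D := by
          have hx : (μ0 B + μ0 E) + c' = A := by
            rw [add_assoc, hc'add, hbadd]
          have hy : (μ0 B + μ0 E) + μ0 D = 1 := by
            rw [← hsum0]; ring
          rw [hx, hy]
          exact hA1
        exact lt_of_add_lt_add_left hlt
      obtain ⟨T', hT'D, hT'm, hT'val⟩ := slice_subset hm μ0 hac0 hDm hc'0 hc'D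
      have hDsplit : D = T' ∪ (D \ T') := (Set.union_diff_cancel hT'D).symm
      have hDTm : MeasurableSet (D \ T') := hDm.diff hT'm
      have hD0split : μ0 D = μ0 T' + μ0 (D \ T') := by
        conv_lhs => rw [hDsplit]
        exact measure_union disjoint_sdiff_right hDTm
      have hD1split : μ1 D = μ1 T' + μ1 (D \ T') := by
        conv_lhs => rw [hDsplit]
        exact measure_union disjoint_sdiff_right hDTm
      have hp0 : μ0 (D \ T') ≠ 0 := by
        intro h
        rw [hD0split, h, add_zero, hT'val] at hc'D
        exact lt_irrefl _ hc'D
      have hlamDT : volume (D \ T') ≠ 0 := fun h => hp0 (hac0 h)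
      have hqp : μ1 (D \ T') < μ0 (D \ T') := hstrictD _ hDTm Set.diff_subset hlamDT
      have hkey : μ0 B + μ0 T' < μ1 B + μ1 T' := by
        have heq : (μ0 B + μ0 T') + μ0 (D \ T') = (μ1 B + μ1 T') + μ1 (D \ T') := by
          have := hbal
          rw [hD0split, hD1split] at this
          calc (μ0 B + μ0 T') + μ0 (D \ T') = μ0 B + (μ0 T' + μ0 (D \ T')) := by ring
          _ = μ1 B + (μ1 T' + μ1 (D \ T')) := this
          _ = (μ1 B + μ1 T') + μ1 (D \ T') := by ring
        have h5 : (μ0 B + μ0 T') + μ1 (D \ T') < (μ0 B + μ0 T') + μ0 (D \ T') :=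
          ENNReal.add_lt_add_left (by
            exact (ENNReal.add_lt_top.2 ⟨measure_lt_top _ _, measure_lt_top _ _⟩).ne) hqp
        rw [heq] at h5
        exact (ENNReal.add_lt_add_iff_right (measure_ne_top μ1 _)).1 h5
      have hBET'disj : Disjoint (B ∪ E) T' :=
        Set.disjoint_union_left.2 ⟨(hBDdisj.mono_right hT'D), (hDEdisj.symm.mono_right hT'D)⟩
      refine ⟨(B ∪ E) ∪ T', (hBm.union hEm).union hT'm, ?_, ?_⟩
      · rw [measure_union hBET'disj hT'm, measure_union hBEdisj hEm, hT'val, add_assoc,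
          hc'add, hbadd]
      · have hval : A = (μ0 B + μ0 T') + μ0 E := by
          rw [← hbadd, ← hc'add, ← hT'val]; ring
        rw [measure_union hBET'disj hT'm, measure_union hBEdisj hEm, ← hEE, hval]
        calc (μ0 B + μ0 T') + μ0 E < (μ1 B + μ1 T') + μ0 E :=
          ENNReal.add_lt_add_right (measure_ne_top μ0 E) hkey
        _ = μ1 B + μ0 E + μ1 T' := by ring
  · -- μ0 B = A : take B itself
    refine ⟨B, hBm, hcase, ?_⟩
    rw [← hcase]
    exact hstrictB B hBm subset_rfl hB0
  · -- A < μ0 B : take a slice of B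
    obtain ⟨S, hSB, hSm, hSval⟩ := slice_subset hm μ0 hac0 hBm hA0 hcase
    have hlamS : volume S ≠ 0 := by
      intro h
      have h2 := hac0 h
      rw [hSval] at h2
      exact hA0.ne' h2
    refine ⟨S, hSm, hSval, ?_⟩
    rw [← hSval]
    exact hstrictB S hSm hSB hlamS
end
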